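/- arXiv:1102.5170 — 4 statements merged into one kernel-verified Lean document; each statement's English description precedes it below -/
import Mathlib

section
/- Let A, B be nonzero positive semidefinite d×d complex matrices. Then: (i) sup(A/B) = ‖B^{−1/2} A B^{−1/2}‖_∞ if range(A) ⊆ range(B), and sup(A/B) = ∞ otherwise; (ii) inf(A/B) = ‖A^{−1/2} B A^{−1/2}‖_∞^{−1} if range(B) ⊆ range(A), and inf(A/B) = 0 otherwise; (iii) h_{S₊}(A,B) = ln(‖A^{−1/2} B A^{−1/2}‖_∞ · ‖B^{−1/2} A B^{−1/2}‖_∞) if range(A) = range(B), and h_{S₊}(A,B) = ∞ otherwise. -/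
open scoped ComplexOrder
open Matrix

noncomputable section

set_option linter.unusedSectionVars false

variable {n : Type*} [Fintype n] [DecidableEq n]

/-- `sup(A/B) := inf {λ : ℝ | A ≤ λ B}` w.r.t. the Loewner order (`⊤` if no such `λ` exists). -/
def msupRatio (A B : Matrix n n ℂ) : EReal :=
  sInf ((fun l : ℝ => (l : EReal)) '' {l : ℝ | (l • B - A).PosSemidef})

/-- `inf(A/B) := sup {λ : ℝ | λ B ≤ A}` w.r.t. the Loewner order. -/
def minfRatio (A B : Matrix n n ℂ) : EReal :=
  sSup ((fun l : ℝ => (l : EReal)) '' {l : ℝ | (A - l • B).PosSemidef})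

/-- Hilbert's projective metric `h_{S₊}(A,B) = ln (sup(A/B) · sup(B/A)) ∈ [0,∞]`
w.r.t. the positive semidefinite cone. -/
def mHilbert (A B : Matrix n n ℂ) : EReal :=
  if msupRatio A B = ⊤ ∨ msupRatio B A = ⊤ then ⊤
  else ((Real.log ((msupRatio A B).toReal * (msupRatio B A).toReal) : ℝ) : EReal)

/-- `tanh(x/4)`, with the convention `tanh(⊤/4) = 1`. -/
def tanhQuarter (x : EReal) : ℝ :=
  if x = ⊤ then 1 else Real.tanh (x.toReal / 4)
open Classical in
/-- The pseudo-inverse square root `A^{-1/2}` of a Hermitian matrix: apply `x ↦ x^{-1/2}` to the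
nonzero eigenvalues and `0` to the eigenvalue `0` (junk value `0` if `A` is not Hermitian). -/
def pinvSqrt (A : Matrix n n ℂ) : Matrix n n ℂ :=
  if h : A.IsHermitian then
    (h.eigenvectorUnitary : Matrix n n ℂ) *
      diagonal (fun i =>
        ((if h.eigenvalues i = 0 then 0 else (h.eigenvalues i) ^ (-(1 : ℝ) / 2) : ℝ) : ℂ)) *
      star (h.eigenvectorUnitary : Matrix n n ℂ)
  else 0

/-- The operator norm `‖A‖_∞` of a matrix, acting on the Euclidean space. -/
def opNorm (A : Matrix n n ℂ) : ℝ :=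
  ‖LinearMap.toContinuousLinearMap (Matrix.toEuclideanLin A)‖

namespace HilbertAux


variable {m : Type*} [Fintype m] [DecidableEq m]

section CF

/-- Conjugate a real diagonal by the eigenvector unitary of a Hermitian matrix. -/
def cf {A : Matrix m m ℂ} (hA : A.IsHermitian) (f : m → ℝ) : Matrix m m ℂ :=
  (hA.eigenvectorUnitary : Matrix m m ℂ) * Matrix.diagonal (fun i => (f i : ℂ)) *
    star (hA.eigenvectorUnitary : Matrix m m ℂ)

variable {A : Matrix m m ℂ} (hA : A.IsHermitian) (f g : m → ℝ)

lemma cf_mul_cf : cf hA f * cf hA g = cf hA (fun i => f i * g i) := by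
  unfold cf
  calc ((hA.eigenvectorUnitary : Matrix m m ℂ) * Matrix.diagonal (fun i => (f i : ℂ)) *
      star (hA.eigenvectorUnitary : Matrix m m ℂ)) *
      ((hA.eigenvectorUnitary : Matrix m m ℂ) * Matrix.diagonal (fun i => (g i : ℂ)) *
      star (hA.eigenvectorUnitary : Matrix m m ℂ))
      = (hA.eigenvectorUnitary : Matrix m m ℂ) * (Matrix.diagonal (fun i => (f i : ℂ)) *
        ((star (hA.eigenvectorUnitary : Matrix m m ℂ)) * (hA.eigenvectorUnitary : Matrix m m ℂ)) *
        Matrix.diagonal (fun i => (g i : ℂ))) *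
      star (hA.eigenvectorUnitary : Matrix m m ℂ) := by
        simp only [Matrix.mul_assoc]
    _ = _ := by
        rw [Unitary.coe_star_mul_self, Matrix.mul_one, Matrix.diagonal_mul_diagonal]
        push_cast
        rfl

lemma smul_diag (l : ℝ) : l • Matrix.diagonal (fun i => (f i : ℂ)) =
    Matrix.diagonal (fun i => ((l * f i : ℝ) : ℂ)) := by
  ext i j
  rcases eq_or_ne i j with rfl | h
  · simp [Complex.real_smul]
  · simp [Matrix.diagonal_apply_ne _ h]

lemma cf_isHermitian' : (cf hA f).IsHermitian := by
  unfold cf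
  rw [Matrix.star_eq_conjTranspose]
  exact Matrix.isHermitian_mul_mul_conjTranspose _
    (Matrix.isHermitian_diagonal_of_self_adjoint _ (by funext i; simp))

lemma cf_conjTranspose : (cf hA f)ᴴ = cf hA f := cf_isHermitian' hA f

lemma cf_isHermitian : (cf hA f).IsHermitian := cf_conjTranspose hA f

lemma cf_posSemidef (h : ∀ i, 0 ≤ f i) : (cf hA f).PosSemidef := by
  have hd : (Matrix.diagonal (fun i => (f i : ℂ))).PosSemidef := by
    refine Matrix.posSemidef_diagonal_iff.mpr fun i => ?_
    exact_mod_cast h i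
  simpa [cf, Matrix.star_eq_conjTranspose] using
    hd.mul_mul_conjTranspose_same (hA.eigenvectorUnitary : Matrix m m ℂ)

lemma posSemidef_cf_iff : (cf hA f).PosSemidef ↔ ∀ i, 0 ≤ f i := by
  refine ⟨fun h => ?_, cf_posSemidef hA f⟩
  have h2 := h.mul_mul_conjTranspose_same (star (hA.eigenvectorUnitary : Matrix m m ℂ))
  have : (star (hA.eigenvectorUnitary : Matrix m m ℂ)) * cf hA f *
      (star (hA.eigenvectorUnitary : Matrix m m ℂ))ᴴ = Matrix.diagonal (fun i => (f i : ℂ)) := by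
    unfold cf
    simp only [Matrix.star_eq_conjTranspose, Matrix.conjTranspose_conjTranspose]
    calc (hA.eigenvectorUnitary : Matrix m m ℂ)ᴴ *
        ((hA.eigenvectorUnitary : Matrix m m ℂ) * Matrix.diagonal (fun i => (f i : ℂ)) *
          (hA.eigenvectorUnitary : Matrix m m ℂ)ᴴ) * (hA.eigenvectorUnitary : Matrix m m ℂ)
        = ((hA.eigenvectorUnitary : Matrix m m ℂ)ᴴ * (hA.eigenvectorUnitary : Matrix m m ℂ)) *
          Matrix.diagonal (fun i => (f i : ℂ)) *
          ((hA.eigenvectorUnitary : Matrix m m ℂ)ᴴ * (hA.eigenvectorUnitary : Matrix m m ℂ)) := by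
          simp only [Matrix.mul_assoc]
      _ = _ := by
          rw [show (hA.eigenvectorUnitary : Matrix m m ℂ)ᴴ * (hA.eigenvectorUnitary : Matrix m m ℂ)
              = 1 from Unitary.coe_star_mul_self _]
          simp
  rw [this] at h2
  intro i
  have := Matrix.posSemidef_diagonal_iff.mp h2 i
  exact_mod_cast this

lemma cf_eigenvalues : cf hA hA.eigenvalues = A := (hA.spectral_theorem).symm

lemma cf_one : cf hA (fun _ => 1) = 1 := by
  unfold cf
  simp [Unitary.coe_mul_star_self]

lemma cf_smul (l : ℝ) : l • cf hA f = cf hA (fun i => l * f i) := by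
  unfold cf
  rw [← smul_mul_assoc, ← mul_smul_comm, smul_diag]

lemma cf_sub : cf hA f - cf hA g = cf hA (fun i => f i - g i) := by
  unfold cf
  rw [← Matrix.sub_mul, ← Matrix.mul_sub, Matrix.diagonal_sub]
  push_cast
  rfl

lemma cf_add : cf hA f + cf hA g = cf hA (fun i => f i + g i) := by
  unfold cf
  rw [← Matrix.add_mul, ← Matrix.mul_add, Matrix.diagonal_add]
  push_cast
  rfl


lemma cf_mulVec_basis (j : m) :
    cf hA f *ᵥ ⇑(hA.eigenvectorBasis j) = (f j : ℂ) • ⇑(hA.eigenvectorBasis j) := by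
  unfold cf
  rw [← Matrix.mulVec_mulVec, ← Matrix.mulVec_mulVec, hA.star_eigenvectorUnitary_mulVec,
    Matrix.diagonal_mulVec_single]
  have h1 : (Pi.single j ((f j : ℂ) * 1) : m → ℂ) = (f j : ℂ) • (Pi.single j 1 : m → ℂ) := by
    rw [mul_one, ← Pi.single_smul, smul_eq_mul, mul_one]
  rw [h1, Matrix.mulVec_smul, hA.eigenvectorUnitary_mulVec]

lemma opNorm_cf_le_iff [Nonempty m] {l : ℝ} :
    opNorm (cf hA f) ≤ l ↔ ∀ i, |f i| ≤ l := by
  set T := LinearMap.toContinuousLinearMap (Matrix.toEuclideanLin (cf hA f)) with hT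
  set b := hA.eigenvectorBasis with hb
  have hbasis : ∀ j, T (b j) = (f j : ℂ) • b j := by
    intro j
    have h0 : T (b j) = (WithLp.equiv 2 (m → ℂ)).symm (cf hA f *ᵥ ⇑(b j)) := rfl
    rw [h0, cf_mulVec_basis]
    rfl
  constructor
  · intro h i
    have h1 : ‖T (b i)‖ ≤ ‖T‖ * ‖b i‖ := T.le_opNorm _
    have hb1 : ‖b i‖ = 1 := b.orthonormal.1 i
    rw [hbasis, norm_smul, hb1] at h1
    have : ‖(f i : ℂ)‖ ≤ ‖T‖ := by simpa using h1
    simpa using this.trans h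
  · intro h
    have hl : 0 ≤ l := le_trans (abs_nonneg _) (h (Classical.arbitrary m))
    refine ContinuousLinearMap.opNorm_le_bound _ hl ?_
    intro x
    have key : ∀ j, b.repr (T x) j = (f j : ℂ) * b.repr x j := by
      intro j
      conv_lhs => rw [← b.sum_repr x, map_sum, map_sum]
      simp only [_root_.map_smul, hbasis, b.repr_self]
      rw [WithLp.ofLp_sum, Finset.sum_apply]
      simp only [PiLp.smul_apply, EuclideanSpace.single_apply, smul_eq_mul, mul_ite, mul_one,
        mul_zero]
      rw [Finset.sum_ite_eq]
      simp [mul_comm]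
    have hnx : ‖T x‖ = ‖b.repr (T x)‖ := (b.repr.norm_map _).symm
    have hnx2 : ‖x‖ = ‖b.repr x‖ := (b.repr.norm_map _).symm
    rw [hnx, hnx2, EuclideanSpace.norm_eq, EuclideanSpace.norm_eq]
    have hterm : ∀ j, ‖b.repr (T x) j‖ ^ 2 ≤ l ^ 2 * ‖b.repr x j‖ ^ 2 := by
      intro j
      rw [key j, norm_mul]
      have h2 : ‖(f j : ℂ)‖ ≤ l := by simpa using h j
      calc (‖(f j : ℂ)‖ * ‖b.repr x j‖) ^ 2 = ‖(f j : ℂ)‖ ^ 2 * ‖b.repr x j‖ ^ 2 := by ring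
        _ ≤ l ^ 2 * ‖b.repr x j‖ ^ 2 := by
            gcongr
    calc Real.sqrt (∑ j, ‖b.repr (T x) j‖ ^ 2)
        ≤ Real.sqrt (∑ j, l ^ 2 * ‖b.repr x j‖ ^ 2) :=
          Real.sqrt_le_sqrt (Finset.sum_le_sum fun j _ => hterm j)
      _ = Real.sqrt (l ^ 2 * ∑ j, ‖b.repr x j‖ ^ 2) := by rw [Finset.mul_sum]
      _ = l * Real.sqrt (∑ j, ‖b.repr x j‖ ^ 2) := by
          rw [Real.sqrt_mul (sq_nonneg l), Real.sqrt_sq hl]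


lemma cf_zero : cf hA (fun _ => 0) = 0 := by
  unfold cf
  simp

end CF

lemma ext_mulVec {M N : Matrix m m ℂ} (h : ∀ x, M *ᵥ x = N *ᵥ x) : M = N := by
  ext i j
  have := congrFun (h (Pi.single j 1)) i
  simpa [Matrix.mulVec_single] using this

lemma exists_real_of_nonneg {q : ℂ} (hq : 0 ≤ q) : ∃ r : ℝ, 0 ≤ r ∧ q = (r : ℂ) := by
  refine ⟨q.re, ?_, ?_⟩
  · exact (Complex.le_def.mp hq).1
  · have him : q.im = 0 := ((Complex.le_def.mp hq).2).symm
    exact Complex.ext rfl (by simp [him])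

lemma sInf_image_Ici (c : ℝ) :
    sInf ((fun l : ℝ => (l : EReal)) '' Set.Ici c) = (c : EReal) := by
  refine le_antisymm (sInf_le ⟨c, Set.self_mem_Ici, rfl⟩) (le_sInf ?_)
  rintro x ⟨y, hy, rfl⟩
  exact EReal.coe_le_coe_iff.mpr hy

lemma sSup_image_Iic (c : ℝ) :
    sSup ((fun l : ℝ => (l : EReal)) '' Set.Iic c) = (c : EReal) := by
  refine le_antisymm (sSup_le ?_) (le_sSup ⟨c, Set.self_mem_Iic, rfl⟩)
  rintro x ⟨y, hy, rfl⟩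
  exact EReal.coe_le_coe_iff.mpr hy

section PSD

variable {A : Matrix m m ℂ} (hA : A.PosSemidef)

/-- eigenvalue function -/
def ev (hA : A.PosSemidef) : m → ℝ := hA.1.eigenvalues

def pfun (hA : A.PosSemidef) : m → ℝ := fun i =>
  if hA.1.eigenvalues i = 0 then 0 else hA.1.eigenvalues i ^ (-(1 : ℝ) / 2)

def qfun (hA : A.PosSemidef) : m → ℝ := fun i => if hA.1.eigenvalues i = 0 then 0 else 1

def sfun (hA : A.PosSemidef) : m → ℝ := fun i => Real.sqrt (hA.1.eigenvalues i)

def projM (hA : A.PosSemidef) : Matrix m m ℂ := cf hA.1 (qfun hA)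

def sqrtM (hA : A.PosSemidef) : Matrix m m ℂ := cf hA.1 (sfun hA)

lemma ev_nonneg (i : m) : 0 ≤ ev hA i := hA.eigenvalues_nonneg i

lemma pfun_ev_pfun (i : m) : pfun hA i * ev hA i * pfun hA i = qfun hA i := by
  unfold pfun ev qfun
  rcases eq_or_ne (hA.1.eigenvalues i) 0 with h | h
  · simp [h]
  · have hpos : 0 < hA.1.eigenvalues i := lt_of_le_of_ne (hA.eigenvalues_nonneg i) (Ne.symm h)
    rw [if_neg h, if_neg h]
    rw [show hA.1.eigenvalues i ^ (-(1:ℝ)/2) * hA.1.eigenvalues i * hA.1.eigenvalues i ^ (-(1:ℝ)/2)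
        = hA.1.eigenvalues i ^ (-(1:ℝ)/2) * hA.1.eigenvalues i ^ (1:ℝ) *
          hA.1.eigenvalues i ^ (-(1:ℝ)/2) by rw [Real.rpow_one]]
    rw [← Real.rpow_add hpos, ← Real.rpow_add hpos]
    rw [show (-(1:ℝ)/2 + 1 + -(1:ℝ)/2) = 0 by ring, Real.rpow_zero]

lemma ev_pfun_pfun (i : m) : ev hA i * (pfun hA i * pfun hA i) = qfun hA i := by
  unfold pfun ev qfun
  rcases eq_or_ne (hA.1.eigenvalues i) 0 with h | h
  · simp [h]
  · have hpos : 0 < hA.1.eigenvalues i := lt_of_le_of_ne (hA.eigenvalues_nonneg i) (Ne.symm h)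
    rw [if_neg h, if_neg h, ← Real.rpow_add hpos]
    rw [show hA.1.eigenvalues i * hA.1.eigenvalues i ^ (-(1:ℝ)/2 + -(1:ℝ)/2)
        = hA.1.eigenvalues i ^ (1:ℝ) * hA.1.eigenvalues i ^ (-(1:ℝ)/2 + -(1:ℝ)/2) by
      rw [Real.rpow_one]]
    rw [← Real.rpow_add hpos]
    rw [show ((1:ℝ) + (-(1:ℝ)/2 + -(1:ℝ)/2)) = 0 by ring, Real.rpow_zero]

lemma sfun_sfun (i : m) : sfun hA i * sfun hA i = ev hA i :=
  Real.mul_self_sqrt (hA.eigenvalues_nonneg i)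

lemma sfun_pfun (i : m) : sfun hA i * pfun hA i = qfun hA i := by
  unfold sfun pfun qfun
  rcases eq_or_ne (hA.1.eigenvalues i) 0 with h | h
  · simp [h]
  · have hpos : 0 < hA.1.eigenvalues i := lt_of_le_of_ne (hA.eigenvalues_nonneg i) (Ne.symm h)
    rw [if_neg h, if_neg h, Real.sqrt_eq_rpow, ← Real.rpow_add hpos]
    rw [show (1/(2:ℝ) + -(1:ℝ)/2) = 0 by ring, Real.rpow_zero]

lemma pfun_sfun (i : m) : pfun hA i * sfun hA i = qfun hA i := by
  rw [mul_comm]; exact sfun_pfun hA i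

lemma qfun_ev (i : m) : qfun hA i * ev hA i = ev hA i := by
  unfold qfun ev
  rcases eq_or_ne (hA.1.eigenvalues i) 0 with h | h <;> simp [h]

lemma ev_qfun (i : m) : ev hA i * qfun hA i = ev hA i := by
  rw [mul_comm]; exact qfun_ev hA i

lemma qfun_qfun (i : m) : qfun hA i * qfun hA i = qfun hA i := by
  unfold qfun
  rcases eq_or_ne (hA.1.eigenvalues i) 0 with h | h <;> simp [h]

lemma qfun_nonneg (i : m) : 0 ≤ qfun hA i := by
  unfold qfun
  rcases eq_or_ne (hA.1.eigenvalues i) 0 with h | h <;> simp [h]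

open Classical in
lemma pinvSqrt_eq : pinvSqrt A = cf hA.1 (pfun hA) := by
  rw [pinvSqrt, dif_pos hA.1]
  rfl

include hA in
lemma pinvSqrt_isHermitian : (pinvSqrt A).IsHermitian := by
  rw [pinvSqrt_eq hA]; exact cf_isHermitian hA.1 _

include hA in
lemma pinvSqrt_conjTranspose : (pinvSqrt A)ᴴ = pinvSqrt A := pinvSqrt_isHermitian hA

lemma sqrtM_conjTranspose : (sqrtM hA)ᴴ = sqrtM hA := cf_isHermitian hA.1 _

lemma cf_ev : cf hA.1 (ev hA) = A := cf_eigenvalues hA.1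

include hA in
lemma pinv_mul_A_mul_pinv : pinvSqrt A * A * pinvSqrt A = projM hA := by
  have h1 : cf hA.1 (pfun hA) * cf hA.1 (ev hA) * cf hA.1 (pfun hA) = cf hA.1 (qfun hA) := by
    rw [cf_mul_cf, cf_mul_cf]
    exact congrArg _ (funext (pfun_ev_pfun hA))
  rw [cf_ev hA] at h1
  rw [pinvSqrt_eq hA, projM]
  exact h1

include hA in
lemma A_mul_pinv_pinv : A * (pinvSqrt A * pinvSqrt A) = projM hA := by
  have h1 : cf hA.1 (ev hA) * (cf hA.1 (pfun hA) * cf hA.1 (pfun hA)) = cf hA.1 (qfun hA) := by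
    rw [cf_mul_cf, cf_mul_cf]
    exact congrArg _ (funext (ev_pfun_pfun hA))
  rw [cf_ev hA] at h1
  rw [pinvSqrt_eq hA, projM]
  exact h1

include hA in
lemma sqrtM_mul_sqrtM : sqrtM hA * sqrtM hA = A := by
  have h1 : cf hA.1 (sfun hA) * cf hA.1 (sfun hA) = cf hA.1 (ev hA) := by
    rw [cf_mul_cf]
    exact congrArg _ (funext (sfun_sfun hA))
  rw [cf_ev hA] at h1
  rw [sqrtM]
  exact h1

include hA in
lemma sqrtM_mul_pinv : sqrtM hA * pinvSqrt A = projM hA := by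
  rw [sqrtM, pinvSqrt_eq hA, cf_mul_cf, projM]
  exact congrArg _ (funext (sfun_pfun hA))

include hA in
lemma pinv_mul_sqrtM : pinvSqrt A * sqrtM hA = projM hA := by
  rw [sqrtM, pinvSqrt_eq hA, cf_mul_cf, projM]
  exact congrArg _ (funext (pfun_sfun hA))

include hA in
lemma projM_mul_A : projM hA * A = A := by
  have h1 : cf hA.1 (qfun hA) * cf hA.1 (ev hA) = cf hA.1 (ev hA) := by
    rw [cf_mul_cf]
    exact congrArg _ (funext (qfun_ev hA))
  rw [cf_ev hA] at h1
  rw [projM]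
  exact h1

include hA in
lemma A_mul_projM : A * projM hA = A := by
  have h1 : cf hA.1 (ev hA) * cf hA.1 (qfun hA) = cf hA.1 (ev hA) := by
    rw [cf_mul_cf]
    exact congrArg _ (funext (ev_qfun hA))
  rw [cf_ev hA] at h1
  rw [projM]
  exact h1

lemma projM_idem : projM hA * projM hA = projM hA := by
  rw [projM, cf_mul_cf]
  exact congrArg _ (funext (qfun_qfun hA))

lemma projM_conjTranspose : (projM hA)ᴴ = projM hA := cf_isHermitian hA.1 _

lemma one_sub_projM : (1 : Matrix m m ℂ) - projM hA = cf hA.1 (fun i => 1 - qfun hA i) := by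
  have h1 : cf hA.1 (fun _ => 1) - cf hA.1 (qfun hA) = cf hA.1 (fun i => 1 - qfun hA i) :=
    cf_sub hA.1 _ _
  rw [cf_one] at h1
  rw [projM, ← h1]

lemma one_sub_projM_posSemidef : ((1 : Matrix m m ℂ) - projM hA).PosSemidef := by
  rw [one_sub_projM hA]
  refine cf_posSemidef hA.1 _ fun i => ?_
  have h1 : qfun hA i ≤ 1 := by
    unfold qfun
    rcases eq_or_ne (hA.1.eigenvalues i) 0 with h | h <;> simp [h]
  linarith

lemma projM_fix {y : m → ℂ} (hy : y ∈ LinearMap.range A.mulVecLin) :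
    projM hA *ᵥ y = y := by
  obtain ⟨x, hx⟩ := hy
  rw [Matrix.mulVecLin_apply] at hx
  subst hx
  rw [Matrix.mulVec_mulVec, projM_mul_A hA]

lemma range_le_iff (M : Matrix m m ℂ) :
    LinearMap.range M.mulVecLin ≤ LinearMap.range A.mulVecLin ↔ projM hA * M = M := by
  constructor
  · intro h
    refine ext_mulVec fun x => ?_
    rw [← Matrix.mulVec_mulVec]
    exact projM_fix hA (h ⟨x, rfl⟩)
  · intro h x hx
    obtain ⟨z, hz⟩ := hx
    rw [Matrix.mulVecLin_apply] at hz
    refine ⟨pinvSqrt A *ᵥ (pinvSqrt A *ᵥ x), ?_⟩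
    rw [Matrix.mulVecLin_apply, Matrix.mulVec_mulVec, Matrix.mulVec_mulVec,
      Matrix.mul_assoc, A_mul_pinv_pinv hA, ← hz, Matrix.mulVec_mulVec, h]

include hA in
lemma range_le_of_ker {B : Matrix m m ℂ} (hB : B.PosSemidef)
    (h : ∀ x, A *ᵥ x = 0 → B *ᵥ x = 0) :
    LinearMap.range B.mulVecLin ≤ LinearMap.range A.mulVecLin := by
  rw [range_le_iff hA]
  have hBP : B * projM hA = B := by
    have key : ∀ x, (B * ((1 : Matrix m m ℂ) - projM hA)) *ᵥ x = 0 := by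
      intro x
      rw [← Matrix.mulVec_mulVec]
      apply h
      rw [Matrix.mulVec_mulVec, Matrix.mul_sub, Matrix.mul_one, A_mul_projM hA, sub_self,
        Matrix.zero_mulVec]
    have h0 : B * ((1 : Matrix m m ℂ) - projM hA) = 0 :=
      ext_mulVec fun x => by rw [key x, Matrix.zero_mulVec]
    have h1 : B - B * projM hA = 0 := by
      rw [← h0, Matrix.mul_sub, Matrix.mul_one]
    have := sub_eq_zero.mp h1
    exact this.symm
  calc projM hA * B = (B * projM hA)ᴴ := by
        rw [Matrix.conjTranspose_mul, projM_conjTranspose hA, hB.1.eq]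
    _ = Bᴴ := by rw [hBP]
    _ = B := hB.1.eq

end PSD

section Main

variable {A B : Matrix m m ℂ}

lemma smul_posSemidef {C : Matrix m m ℂ} (hC : C.PosSemidef) {t : ℝ} (ht : 0 ≤ t) :
    (t • C).PosSemidef := by
  refine .of_dotProduct_mulVec_nonneg ?_ ?_
  · have h1 : (t • C)ᴴ = t • Cᴴ := by
      ext i j
      simp [Matrix.conjTranspose_apply]
    rw [Matrix.IsHermitian, h1, hC.1.eq]
  · intro x
    rw [Matrix.smul_mulVec, dotProduct_smul]
    have h1 := hC.dotProduct_mulVec_nonneg x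
    rw [Complex.real_smul]
    refine mul_nonneg ?_ h1
    exact_mod_cast ht

theorem msup_top (hA : A.PosSemidef) (hB : B.PosSemidef)
    (hr : ¬ LinearMap.range A.mulVecLin ≤ LinearMap.range B.mulVecLin) :
    msupRatio A B = ⊤ := by
  have hset : {l : ℝ | (l • B - A).PosSemidef} = ∅ := by
    ext l
    simp only [Set.mem_setOf_eq, Set.mem_empty_iff_false, iff_false]
    intro h
    apply hr
    refine range_le_of_ker hB hA fun x hx => ?_
    have h2 := h.dotProduct_mulVec_nonneg x
    have hBx : (l • B) *ᵥ x = 0 := by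
      rw [Matrix.smul_mulVec, hx, smul_zero]
    rw [Matrix.sub_mulVec, hBx, zero_sub, dotProduct_neg] at h2
    have h3 := hA.dotProduct_mulVec_nonneg x
    have h4 : star x ⬝ᵥ A *ᵥ x = 0 := le_antisymm (neg_nonneg.mp h2) h3
    exact (hA.dotProduct_mulVec_zero_iff x).mp h4
  rw [msupRatio, hset]
  simp

theorem minf_zero (hA : A.PosSemidef) (hB : B.PosSemidef)
    (hr : ¬ LinearMap.range B.mulVecLin ≤ LinearMap.range A.mulVecLin) :
    minfRatio A B = 0 := by
  have hset : {l : ℝ | (A - l • B).PosSemidef} = Set.Iic 0 := by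
    ext l
    simp only [Set.mem_setOf_eq, Set.mem_Iic]
    constructor
    · intro h
      by_contra hl
      push_neg at hl
      apply hr
      refine range_le_of_ker hA hB fun x hx => ?_
      have h2 := h.dotProduct_mulVec_nonneg x
      rw [Matrix.sub_mulVec, hx, zero_sub, dotProduct_neg, Matrix.smul_mulVec,
        dotProduct_smul] at h2
      obtain ⟨r, hr0, hq'⟩ := exists_real_of_nonneg (hB.dotProduct_mulVec_nonneg x)
      rw [hq'] at h2
      have h5 : (((l * r : ℝ)) : ℂ) ≤ 0 := by
        have h6 := neg_nonneg.mp h2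
        rw [Complex.real_smul] at h6
        push_cast
        exact h6
      have h7 : l * r ≤ 0 := by exact_mod_cast h5
      have h8 : r = 0 := by
        rcases hr0.lt_or_eq with h' | h'
        · exfalso
          have h9 := mul_pos hl h'
          exact absurd h9 (not_lt.mpr h7)
        · exact h'.symm
      refine (hB.dotProduct_mulVec_zero_iff x).mp ?_
      rw [hq', h8]
      simp
    · intro hl
      have h1 : A - l • B = A + (-l) • B := by
        rw [sub_eq_add_neg, ← neg_smul]
      rw [h1]
      exact hA.add (smul_posSemidef hB (neg_nonneg.mpr hl))
  rw [minfRatio, hset, sSup_image_Iic]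
  exact EReal.coe_zero

theorem smul_one_sub_iff {M : Matrix m m ℂ} [Nonempty m] (hM : M.PosSemidef) (l : ℝ) :
    (l • (1 : Matrix m m ℂ) - M).PosSemidef ↔ opNorm M ≤ l := by
  have hν : ∀ i, 0 ≤ hM.1.eigenvalues i := hM.eigenvalues_nonneg
  have hrep : l • (1 : Matrix m m ℂ) - M = cf hM.1 (fun i => l * 1 - hM.1.eigenvalues i) := by
    calc l • (1 : Matrix m m ℂ) - M
        = l • cf hM.1 (fun _ => 1) - cf hM.1 hM.1.eigenvalues := by
          rw [cf_one hM.1, cf_eigenvalues hM.1]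
      _ = cf hM.1 (fun _ => l * 1) - cf hM.1 hM.1.eigenvalues := by rw [cf_smul]
      _ = cf hM.1 (fun i => l * 1 - hM.1.eigenvalues i) := cf_sub hM.1 _ _
  have hpsd : (l • (1 : Matrix m m ℂ) - M).PosSemidef ↔ ∀ i, hM.1.eigenvalues i ≤ l := by
    rw [hrep, posSemidef_cf_iff]
    constructor <;> intro h i <;> have := h i <;> linarith [this]
  have hnorm : opNorm M ≤ l ↔ ∀ i, |hM.1.eigenvalues i| ≤ l := by
    have h1 := opNorm_cf_le_iff hM.1 hM.1.eigenvalues (l := l)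
    rwa [cf_eigenvalues hM.1] at h1
  rw [hpsd, hnorm]
  constructor
  · intro h i
    rw [abs_of_nonneg (hν i)]
    exact h i
  · intro h i
    exact (le_abs_self _).trans (h i)

theorem msup_psd_iff [Nonempty m] (hA : A.PosSemidef) (hB : B.PosSemidef) (hB0 : B ≠ 0)
    (hr : LinearMap.range A.mulVecLin ≤ LinearMap.range B.mulVecLin) (l : ℝ) :
    (l • B - A).PosSemidef ↔ opNorm (pinvSqrt B * A * pinvSqrt B) ≤ l := by
  have hpH : (pinvSqrt B)ᴴ = pinvSqrt B := pinvSqrt_conjTranspose hB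
  have hM : (pinvSqrt B * A * pinvSqrt B).PosSemidef := by
    have h1 := hA.mul_mul_conjTranspose_same (pinvSqrt B)
    rwa [hpH] at h1
  have hPA : projM hB * A = A := (range_le_iff hB A).mp hr
  have hAP : A * projM hB = A := by
    have h1 := congrArg Matrix.conjTranspose hPA
    rwa [Matrix.conjTranspose_mul, projM_conjTranspose hB, hA.1.eq] at h1
  rw [← smul_one_sub_iff hM l]
  constructor
  · intro h
    have hl : 0 ≤ l := by
      have hex : ∃ j, hB.1.eigenvalues j ≠ 0 := by
        by_contra hno
        push_neg at hno
        apply hB0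
        have h1 : cf hB.1 hB.1.eigenvalues = cf hB.1 (fun _ => 0) := congrArg _ (funext hno)
        rwa [cf_eigenvalues hB.1, cf_zero hB.1] at h1
      obtain ⟨j, hj⟩ := hex
      have hjpos : 0 < hB.1.eigenvalues j :=
        lt_of_le_of_ne (hB.eigenvalues_nonneg j) (Ne.symm hj)
      have hvne : ⇑(hB.1.eigenvectorBasis j) ≠ 0 := by
        intro h0
        apply hB.1.eigenvectorBasis.orthonormal.ne_zero j
        ext i
        exact congrFun h0 i
      have h2 := h.dotProduct_mulVec_nonneg ⇑(hB.1.eigenvectorBasis j)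
      rw [Matrix.sub_mulVec, Matrix.smul_mulVec, hB.1.mulVec_eigenvectorBasis,
        dotProduct_sub, dotProduct_smul, dotProduct_smul] at h2
      have hAv := hA.dotProduct_mulVec_nonneg ⇑(hB.1.eigenvectorBasis j)
      have h3 := le_trans hAv (sub_nonneg.mp h2)
      obtain ⟨r, hr0, hrq⟩ :=
        exists_real_of_nonneg (dotProduct_star_self_nonneg ⇑(hB.1.eigenvectorBasis j))
      have hrpos : 0 < r := by
        rcases hr0.lt_or_eq with h' | h'
        · exact h'
        · exfalso
          apply hvne
          apply dotProduct_star_self_eq_zero.mp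
          rw [hrq, ← h']
          simp
      rw [hrq] at h3
      have h4 : (0 : ℂ) ≤ (((l * (hB.1.eigenvalues j * r) : ℝ)) : ℂ) := by
        convert h3 using 1
        rw [Complex.real_smul, Complex.real_smul]
        push_cast
        ring
      have h5 : 0 ≤ l * (hB.1.eigenvalues j * r) := by exact_mod_cast h4
      by_contra hneg
      push_neg at hneg
      have h6 := mul_neg_of_neg_of_pos hneg (mul_pos hjpos hrpos)
      exact absurd h5 (not_le.mpr h6)
    have h5 : (pinvSqrt B * (l • B - A) * pinvSqrt B).PosSemidef := by
      have h6 := h.mul_mul_conjTranspose_same (pinvSqrt B)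
      rwa [hpH] at h6
    have h6 : pinvSqrt B * (l • B - A) * pinvSqrt B
        = l • projM hB - pinvSqrt B * A * pinvSqrt B := by
      rw [Matrix.mul_sub, Matrix.sub_mul, mul_smul_comm, smul_mul_assoc,
        pinv_mul_A_mul_pinv hB]
    have h7 : (l • ((1 : Matrix m m ℂ) - projM hB)).PosSemidef :=
      smul_posSemidef (one_sub_projM_posSemidef hB) hl
    have h8 : l • (1 : Matrix m m ℂ) - pinvSqrt B * A * pinvSqrt B
        = (l • projM hB - pinvSqrt B * A * pinvSqrt B)
          + l • ((1 : Matrix m m ℂ) - projM hB) := by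
      rw [smul_sub]
      abel
    rw [h8]
    exact (h6 ▸ h5).add h7
  · intro h
    have h2 := h.mul_mul_conjTranspose_same (sqrtM hB)
    rw [sqrtM_conjTranspose hB] at h2
    have h3 : sqrtM hB * (l • (1 : Matrix m m ℂ) - pinvSqrt B * A * pinvSqrt B) * sqrtM hB
        = l • B - A := by
      rw [Matrix.mul_sub, Matrix.sub_mul, mul_smul_comm, smul_mul_assoc, Matrix.mul_one,
        sqrtM_mul_sqrtM hB]
      refine congrArg (HSub.hSub (l • B)) ?_
      calc sqrtM hB * (pinvSqrt B * A * pinvSqrt B) * sqrtM hB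
          = (sqrtM hB * pinvSqrt B) * (A * (pinvSqrt B * sqrtM hB)) := by
            simp only [Matrix.mul_assoc]
        _ = projM hB * (A * projM hB) := by rw [sqrtM_mul_pinv hB, pinv_mul_sqrtM hB]
        _ = A := by rw [hAP, hPA]
    rwa [h3] at h2

theorem msup_eq [Nonempty m] (hA : A.PosSemidef) (hB : B.PosSemidef) (hB0 : B ≠ 0)
    (hr : LinearMap.range A.mulVecLin ≤ LinearMap.range B.mulVecLin) :
    msupRatio A B = ((opNorm (pinvSqrt B * A * pinvSqrt B) : ℝ) : EReal) := by
  have hset : {l : ℝ | (l • B - A).PosSemidef}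
      = Set.Ici (opNorm (pinvSqrt B * A * pinvSqrt B)) := by
    ext l
    simp only [Set.mem_setOf_eq, Set.mem_Ici]
    exact msup_psd_iff hA hB hB0 hr l
  rw [msupRatio, hset, sInf_image_Ici]

theorem minf_eq [Nonempty m] (hA : A.PosSemidef) (hB : B.PosSemidef) (hB0 : B ≠ 0)
    (hr : LinearMap.range B.mulVecLin ≤ LinearMap.range A.mulVecLin) :
    minfRatio A B = (((opNorm (pinvSqrt A * B * pinvSqrt A))⁻¹ : ℝ) : EReal) := by
  have hpH : (pinvSqrt A)ᴴ = pinvSqrt A := pinvSqrt_conjTranspose hA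
  have hN : (pinvSqrt A * B * pinvSqrt A).PosSemidef := by
    have h1 := hB.mul_mul_conjTranspose_same (pinvSqrt A)
    rwa [hpH] at h1
  have hPB : projM hA * B = B := (range_le_iff hA B).mp hr
  have hBP : B * projM hA = B := by
    have h1 := congrArg Matrix.conjTranspose hPB
    rwa [Matrix.conjTranspose_mul, projM_conjTranspose hA, hB.1.eq] at h1
  have hSNS : sqrtM hA * (pinvSqrt A * B * pinvSqrt A) * sqrtM hA = B := by
    calc sqrtM hA * (pinvSqrt A * B * pinvSqrt A) * sqrtM hA
        = (sqrtM hA * pinvSqrt A) * (B * (pinvSqrt A * sqrtM hA)) := by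
          simp only [Matrix.mul_assoc]
      _ = projM hA * (B * projM hA) := by rw [sqrtM_mul_pinv hA, pinv_mul_sqrtM hA]
      _ = B := by rw [hBP, hPB]
  have hN0 : pinvSqrt A * B * pinvSqrt A ≠ 0 := by
    intro h0
    apply hB0
    rw [← hSNS, h0, Matrix.mul_zero, Matrix.zero_mul]
  have hc0 : 0 < opNorm (pinvSqrt A * B * pinvSqrt A) := by
    rcases (norm_nonneg (LinearMap.toContinuousLinearMap
        (Matrix.toEuclideanLin (pinvSqrt A * B * pinvSqrt A)))).lt_or_eq with h' | h'
    · exact h'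
    · exfalso
      apply hN0
      have hT := norm_eq_zero.mp h'.symm
      have hL : Matrix.toEuclideanLin (pinvSqrt A * B * pinvSqrt A) = 0 := by
        apply LinearMap.ext
        intro x
        have h1 : LinearMap.toContinuousLinearMap
            (Matrix.toEuclideanLin (pinvSqrt A * B * pinvSqrt A)) x = 0 := by
          rw [hT]
          rfl
        exact h1
      exact (LinearEquiv.map_eq_zero_iff Matrix.toEuclideanLin).mp hL
  have hν : ∀ i, 0 ≤ hN.1.eigenvalues i := hN.eigenvalues_nonneg
  have hnorm : ∀ t : ℝ, opNorm (pinvSqrt A * B * pinvSqrt A) ≤ t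
      ↔ ∀ i, |hN.1.eigenvalues i| ≤ t := by
    intro t
    have h1 := opNorm_cf_le_iff hN.1 hN.1.eigenvalues (l := t)
    rwa [cf_eigenvalues hN.1] at h1
  have hνc : ∀ i, hN.1.eigenvalues i ≤ opNorm (pinvSqrt A * B * pinvSqrt A) := fun i =>
    (le_abs_self _).trans (((hnorm _).mp le_rfl) i)
  have h9 : ∀ l : ℝ, (1 : Matrix m m ℂ) - l • (pinvSqrt A * B * pinvSqrt A)
      = cf hN.1 (fun i => 1 - l * hN.1.eigenvalues i) := by
    intro l
    calc (1 : Matrix m m ℂ) - l • (pinvSqrt A * B * pinvSqrt A)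
        = cf hN.1 (fun _ => 1) - l • cf hN.1 hN.1.eigenvalues := by
          rw [cf_one hN.1, cf_eigenvalues hN.1]
      _ = cf hN.1 (fun _ => 1) - cf hN.1 (fun i => l * hN.1.eigenvalues i) := by rw [cf_smul]
      _ = cf hN.1 (fun i => 1 - l * hN.1.eigenvalues i) := cf_sub hN.1 _ _
  have hset : {l : ℝ | (A - l • B).PosSemidef}
      = Set.Iic (opNorm (pinvSqrt A * B * pinvSqrt A))⁻¹ := by
    ext l
    simp only [Set.mem_setOf_eq, Set.mem_Iic]
    constructor
    · intro h
      have h5 : (pinvSqrt A * (A - l • B) * pinvSqrt A).PosSemidef := by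
        have h6 := h.mul_mul_conjTranspose_same (pinvSqrt A)
        rwa [hpH] at h6
      have h6 : pinvSqrt A * (A - l • B) * pinvSqrt A
          = projM hA - l • (pinvSqrt A * B * pinvSqrt A) := by
        rw [Matrix.mul_sub, Matrix.sub_mul, mul_smul_comm, smul_mul_assoc,
          pinv_mul_A_mul_pinv hA]
      have h7 : ((1 : Matrix m m ℂ) - l • (pinvSqrt A * B * pinvSqrt A)).PosSemidef := by
        have h8 : (1 : Matrix m m ℂ) - l • (pinvSqrt A * B * pinvSqrt A)
            = (projM hA - l • (pinvSqrt A * B * pinvSqrt A))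
              + ((1 : Matrix m m ℂ) - projM hA) := by abel
        rw [h8]
        exact (h6 ▸ h5).add (one_sub_projM_posSemidef hA)
      rw [h9 l, posSemidef_cf_iff] at h7
      rcases le_or_gt l 0 with hl | hl
      · exact hl.trans (inv_nonneg.mpr hc0.le)
      · have hinv : ∀ i, hN.1.eigenvalues i ≤ l⁻¹ := by
          intro i
          have h10 : l * hN.1.eigenvalues i ≤ l * l⁻¹ := by
            rw [mul_inv_cancel₀ hl.ne']
            have := h7 i
            linarith
          exact (mul_le_mul_iff_right₀ hl).mp h10
        have h11 : opNorm (pinvSqrt A * B * pinvSqrt A) ≤ l⁻¹ :=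
          (hnorm l⁻¹).mpr fun i => by rw [abs_of_nonneg (hν i)]; exact hinv i
        calc l = (l⁻¹)⁻¹ := (inv_inv l).symm
          _ ≤ (opNorm (pinvSqrt A * B * pinvSqrt A))⁻¹ := inv_anti₀ hc0 h11
    · intro hl
      have h7 : ((1 : Matrix m m ℂ) - l • (pinvSqrt A * B * pinvSqrt A)).PosSemidef := by
        rw [h9 l]
        refine cf_posSemidef hN.1 _ fun i => ?_
        have h10 : l * hN.1.eigenvalues i ≤ 1 := by
          calc l * hN.1.eigenvalues i
              ≤ (opNorm (pinvSqrt A * B * pinvSqrt A))⁻¹ * hN.1.eigenvalues i :=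
                mul_le_mul_of_nonneg_right hl (hν i)
            _ ≤ (opNorm (pinvSqrt A * B * pinvSqrt A))⁻¹ * opNorm (pinvSqrt A * B * pinvSqrt A) :=
                mul_le_mul_of_nonneg_left (hνc i) (inv_nonneg.mpr hc0.le)
            _ = 1 := inv_mul_cancel₀ hc0.ne'
        linarith
      have h2 := h7.mul_mul_conjTranspose_same (sqrtM hA)
      rw [sqrtM_conjTranspose hA] at h2
      have h3 : sqrtM hA * ((1 : Matrix m m ℂ) - l • (pinvSqrt A * B * pinvSqrt A)) * sqrtM hA
          = A - l • B := by
        rw [Matrix.mul_sub, Matrix.sub_mul, mul_smul_comm, smul_mul_assoc, Matrix.mul_one,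
          sqrtM_mul_sqrtM hA, hSNS]
      rwa [h3] at h2
  rw [minfRatio, hset, sSup_image_Iic]

end Main

end HilbertAux

/-- **Hilbert distance w.r.t. the positive semidefinite cone.** -/
theorem msupRatio_minfRatio_mHilbert_eq
    {d : ℕ} (A B : Matrix (Fin d) (Fin d) ℂ)
    (hA : A.PosSemidef) (hB : B.PosSemidef) (hA0 : A ≠ 0) (hB0 : B ≠ 0) :
    ((LinearMap.range A.mulVecLin ≤ LinearMap.range B.mulVecLin →
        msupRatio A B = ((opNorm (pinvSqrt B * A * pinvSqrt B) : ℝ) : EReal)) ∧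
      (¬ LinearMap.range A.mulVecLin ≤ LinearMap.range B.mulVecLin →
        msupRatio A B = ⊤)) ∧
    ((LinearMap.range B.mulVecLin ≤ LinearMap.range A.mulVecLin →
        minfRatio A B = (((opNorm (pinvSqrt A * B * pinvSqrt A))⁻¹ : ℝ) : EReal)) ∧
      (¬ LinearMap.range B.mulVecLin ≤ LinearMap.range A.mulVecLin →
        minfRatio A B = 0)) ∧
    ((LinearMap.range A.mulVecLin = LinearMap.range B.mulVecLin →
        mHilbert A B = ((Real.log
          (opNorm (pinvSqrt A * B * pinvSqrt A) * opNorm (pinvSqrt B * A * pinvSqrt B)) : ℝ) : EReal)) ∧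
      (LinearMap.range A.mulVecLin ≠ LinearMap.range B.mulVecLin →
        mHilbert A B = ⊤)) := by
  have hd : Nonempty (Fin d) := by
    rcases Nat.eq_zero_or_pos d with h0 | h0
    · exfalso
      apply hA0
      subst h0
      ext i j
      exact i.elim0
    · exact ⟨⟨0, h0⟩⟩
  refine ⟨⟨fun hr => HilbertAux.msup_eq hA hB hB0 hr, fun hr => HilbertAux.msup_top hA hB hr⟩,
    ⟨fun hr => HilbertAux.minf_eq hA hB hB0 hr, fun hr => HilbertAux.minf_zero hA hB hr⟩,
    ?_, ?_⟩
  · intro hr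
    have h1 := HilbertAux.msup_eq hA hB hB0 hr.le
    have h2 := HilbertAux.msup_eq hB hA hA0 hr.ge
    have hcond : ¬ (msupRatio A B = ⊤ ∨ msupRatio B A = ⊤) := by
      rw [h1, h2]
      push_neg
      exact ⟨EReal.coe_ne_top _, EReal.coe_ne_top _⟩
    rw [mHilbert, if_neg hcond, h1, h2, EReal.toReal_coe, EReal.toReal_coe, mul_comm]
  · intro hr
    have hcase : ¬ (LinearMap.range A.mulVecLin ≤ LinearMap.range B.mulVecLin) ∨
        ¬ (LinearMap.range B.mulVecLin ≤ LinearMap.range A.mulVecLin) := by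
      by_contra hc
      push_neg at hc
      exact hr (le_antisymm hc.1 hc.2)
    have hcond : msupRatio A B = ⊤ ∨ msupRatio B A = ⊤ := by
      rcases hcase with h | h
      · exact Or.inl (HilbertAux.msup_top hA hB h)
      · exact Or.inr (HilbertAux.msup_top hB hA h)
    rw [mHilbert, if_pos hcond]

end
end

section
/- For i = 1,2 let A_i, B_i be nonzero positive semidefinite d_i×d_i complex matrices. Then, with h computed with respect to the positive semidefinite cones in the respective matrix sizes and addition in [0,∞], h_{S₊}(A₁⊗A₂, B₁⊗B₂) = h_{S₊}(A₁,B₁) + h_{S₊}(A₂,B₂), where ⊗ denotes the Kronecker (tensor) product. -/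
set_option linter.unusedSectionVars false
set_option maxHeartbeats 1000000

open scoped ComplexOrder
open Matrix

noncomputable section

variable {n : Type*} [Fintype n] [DecidableEq n]

/-! ### Auxiliary lemmas -/

section Aux

lemma herm_star_qf (M : Matrix n n ℂ) (h : M.IsHermitian) (x : n → ℂ) :
    star (star x ⬝ᵥ M *ᵥ x) = star x ⬝ᵥ M *ᵥ x := by
  calc star (star x ⬝ᵥ M *ᵥ x) = star (M *ᵥ x) ⬝ᵥ star (star x) := (star_dotProduct_star _ _).symm
    _ = (star x ᵥ* Mᴴ) ⬝ᵥ x := by rw [star_mulVec, star_star]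
    _ = star x ⬝ᵥ M *ᵥ x := by rw [← dotProduct_mulVec, h.eq]

lemma herm_im (M : Matrix n n ℂ) (h : M.IsHermitian) (x : n → ℂ) :
    (star x ⬝ᵥ M *ᵥ x).im = 0 :=
  Complex.conj_eq_iff_im.mp (herm_star_qf M h x)

lemma herm_smul_sub {A B : Matrix n n ℂ} (hA : A.IsHermitian) (hB : B.IsHermitian) (l : ℝ) :
    (l • B - A).IsHermitian := by
  have h1 : (l • B)ᴴ = l • Bᴴ := by simp [Matrix.conjTranspose_smul]
  have h2 : (l • B).IsHermitian := by unfold Matrix.IsHermitian; rw [h1, hB.eq]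
  exact h2.sub hA

/-- membership criterion for the set defining `msupRatio` -/
lemma mem_S_iff {A B : Matrix n n ℂ} (hA : A.IsHermitian) (hB : B.IsHermitian) (l : ℝ) :
    (l • B - A).PosSemidef ↔ ∀ x : n → ℂ, (star x ⬝ᵥ A *ᵥ x).re ≤ l * (star x ⬝ᵥ B *ᵥ x).re := by
  have hherm : (l • B - A).IsHermitian := herm_smul_sub hA hB l
  constructor
  · intro hp x
    have h0 := hp.dotProduct_mulVec_nonneg x
    rw [sub_mulVec, dotProduct_sub, smul_mulVec, dotProduct_smul] at h0
    have := (Complex.le_def.mp h0).1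
    simpa [Complex.sub_re, Complex.smul_re] using this
  · intro hx
    refine posSemidef_iff_dotProduct_mulVec.mpr ⟨hherm, fun x => ?_⟩
    rw [Complex.le_def]
    constructor
    · have := hx x
      rw [sub_mulVec, dotProduct_sub, smul_mulVec, dotProduct_smul]
      simpa [Complex.sub_re, Complex.smul_re] using sub_nonneg.mpr this
    · simp [herm_im _ hherm x]

lemma psd_re_nonneg {A : Matrix n n ℂ} (hA : A.PosSemidef) (x : n → ℂ) :
    0 ≤ (star x ⬝ᵥ A *ᵥ x).re := by
  have := (Complex.le_def.mp (hA.dotProduct_mulVec_nonneg x)).1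
  simpa using this

lemma exists_pos_qf {A : Matrix n n ℂ} (hA : A.PosSemidef) (h0 : A ≠ 0) :
    ∃ x : n → ℂ, 0 < (star x ⬝ᵥ A *ᵥ x).re := by
  by_contra h
  push_neg at h
  apply h0
  have hz : ∀ x, A *ᵥ x = 0 := by
    intro x
    refine (hA.dotProduct_mulVec_zero_iff x).mp ?_
    have h1 := psd_re_nonneg hA x
    have h2 := herm_im A hA.1 x
    have h3 := h x
    apply Complex.ext
    · simpa using le_antisymm h3 h1
    · simpa using h2
  ext i j
  have := congrFun (hz (Pi.single j 1)) i
  rw [mulVec_single] at this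
  simpa using this

lemma smul_psd {B : Matrix n n ℂ} (hB : B.PosSemidef) {l : ℝ} (hl : 0 ≤ l) :
    (l • B).PosSemidef := by
  refine posSemidef_iff_dotProduct_mulVec.mpr ⟨?_, ?_⟩
  · have h1 : (l • B)ᴴ = l • Bᴴ := by simp [Matrix.conjTranspose_smul]
    unfold Matrix.IsHermitian
    rw [h1, hB.1.eq]
  · intro x
    rw [smul_mulVec, dotProduct_smul, Complex.le_def]
    constructor
    · simpa [Complex.smul_re] using mul_nonneg hl (psd_re_nonneg hB x)
    · simp [Complex.smul_im, herm_im B hB.1 x]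

open Kronecker

lemma kron_conjTranspose {m : Type*} (M : Matrix n n ℂ) (N : Matrix m m ℂ) :
    (M ⊗ₖ N)ᴴ = Mᴴ ⊗ₖ Nᴴ := by
  ext ⟨i, j⟩ ⟨k, l⟩
  simp [conjTranspose_apply, kroneckerMap_apply, mul_comm]

lemma kron_psd {m : Type*} [Fintype m] [DecidableEq m] {A : Matrix n n ℂ} {B : Matrix m m ℂ}
    (hA : A.PosSemidef) (hB : B.PosSemidef) : (A ⊗ₖ B).PosSemidef := by
  exact hA.kronecker hB

lemma qf_kron {m : Type*} [Fintype m] (M : Matrix n n ℂ) (N : Matrix m m ℂ)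
    (x : n → ℂ) (y : m → ℂ) :
    star (fun p : n × m => x p.1 * y p.2) ⬝ᵥ (M ⊗ₖ N) *ᵥ (fun p : n × m => x p.1 * y p.2)
      = (star x ⬝ᵥ M *ᵥ x) * (star y ⬝ᵥ N *ᵥ y) := by
  have hR : (star x ⬝ᵥ M *ᵥ x) * (star y ⬝ᵥ N *ᵥ y)
      = (∑ i, ∑ k, star (x i) * M i k * x k) * (∑ j, ∑ l, star (y j) * N j l * y l) := by
    simp only [dotProduct, mulVec, Pi.star_apply, Finset.mul_sum, mul_assoc]
  rw [hR, Finset.sum_mul_sum]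
  simp only [dotProduct, mulVec, kroneckerMap_apply, Fintype.sum_prod_type, Pi.star_apply,
    Finset.mul_sum, Finset.sum_mul, star_mul']
  refine Finset.sum_congr rfl fun i _ => Finset.sum_congr rfl fun j _ => ?_
  rw [Finset.sum_comm]
  exact Finset.sum_congr rfl fun l _ => Finset.sum_congr rfl fun k _ => by ring

/-- real version of `qf_kron` for Hermitian matrices -/
lemma qf_kron_re {m : Type*} [Fintype m] [DecidableEq m] {M : Matrix n n ℂ} {N : Matrix m m ℂ}
    (hM : M.IsHermitian) (hN : N.IsHermitian) (x : n → ℂ) (y : m → ℂ) :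
    (star (fun p : n × m => x p.1 * y p.2) ⬝ᵥ (M ⊗ₖ N) *ᵥ (fun p : n × m => x p.1 * y p.2)).re
      = (star x ⬝ᵥ M *ᵥ x).re * (star y ⬝ᵥ N *ᵥ y).re := by
  rw [qf_kron, Complex.mul_re, herm_im M hM x, herm_im N hN y]
  ring

lemma S_lb {A B : Matrix n n ℂ} (hA : A.PosSemidef) (hB : B.PosSemidef) (hA0 : A ≠ 0) :
    ∃ c : ℝ, 0 < c ∧ ∀ l : ℝ, (l • B - A).PosSemidef → c ≤ l := by
  obtain ⟨x, hx⟩ := exists_pos_qf hA hA0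
  by_cases hbx : (star x ⬝ᵥ B *ᵥ x).re = 0
  · refine ⟨1, one_pos, fun l hl => absurd ((mem_S_iff hA.1 hB.1 l).mp hl x) ?_⟩
    rw [hbx, mul_zero]
    linarith
  · have hbpos : 0 < (star x ⬝ᵥ B *ᵥ x).re := lt_of_le_of_ne (psd_re_nonneg hB x) (Ne.symm hbx)
    refine ⟨_, div_pos hx hbpos, fun l hl => ?_⟩
    have := (mem_S_iff hA.1 hB.1 l).mp hl x
    rw [div_le_iff₀ hbpos]
    linarith

lemma msup_eq_top_iff (A B : Matrix n n ℂ) :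
    msupRatio A B = ⊤ ↔ {l : ℝ | (l • B - A).PosSemidef} = ∅ := by
  unfold msupRatio
  constructor
  · intro h
    by_contra hne
    obtain ⟨l, hl⟩ := Set.nonempty_iff_ne_empty.mpr hne
    have hle : sInf ((fun l : ℝ => (l : EReal)) '' {l : ℝ | (l • B - A).PosSemidef}) ≤ (l : EReal) :=
      sInf_le ⟨l, hl, rfl⟩
    rw [h] at hle
    exact (EReal.coe_lt_top l).not_ge hle
  · intro h
    rw [h]
    simp

lemma msup_coe {A B : Matrix n n ℂ} (hS : Set.Nonempty {l : ℝ | (l • B - A).PosSemidef})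
    (hbd : BddBelow {l : ℝ | (l • B - A).PosSemidef}) :
    msupRatio A B = ((sInf {l : ℝ | (l • B - A).PosSemidef} : ℝ) : EReal) := by
  set s := {l : ℝ | (l • B - A).PosSemidef} with hs
  unfold msupRatio
  rw [← hs]
  apply le_antisymm
  · by_contra hlt
    push_neg at hlt
    obtain ⟨c, hc1, hc2⟩ := EReal.exists_between_coe_real hlt
    have hcl : ∀ l ∈ s, c ≤ l := fun l hl => by
      have h1 : (c : EReal) ≤ (l : EReal) := le_of_lt (lt_of_lt_of_le hc2 (sInf_le ⟨l, hl, rfl⟩))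
      exact_mod_cast h1
    have h2 : c ≤ sInf s := le_csInf hS hcl
    have h3 : ((sInf s : ℝ) : EReal) < ((sInf s : ℝ) : EReal) :=
      lt_of_lt_of_le hc1 (by exact_mod_cast h2)
    exact lt_irrefl _ h3
  · apply le_sInf
    rintro b ⟨l, hl, rfl⟩
    exact EReal.coe_le_coe_iff.mpr (csInf_le hbd hl)

section Kron

variable {m : Type*} [Fintype m] [DecidableEq m]
variable {A₁ B₁ : Matrix n n ℂ} {A₂ B₂ : Matrix m m ℂ}

lemma S_kron_mem (hA₁ : A₁.PosSemidef) (hB₂ : B₂.PosSemidef) {l₁ l₂ : ℝ}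
    (h₁ : (l₁ • B₁ - A₁).PosSemidef) (h₂ : (l₂ • B₂ - A₂).PosSemidef) (hl₂ : 0 ≤ l₂) :
    ((l₁ * l₂) • (B₁ ⊗ₖ B₂) - A₁ ⊗ₖ A₂).PosSemidef := by
  have key : (l₁ * l₂) • (B₁ ⊗ₖ B₂) - A₁ ⊗ₖ A₂
      = (l₁ • B₁ - A₁) ⊗ₖ (l₂ • B₂) + A₁ ⊗ₖ (l₂ • B₂ - A₂) := by
    ext ⟨i, j⟩ ⟨k, l⟩
    simp only [Matrix.sub_apply, Matrix.add_apply, Matrix.smul_apply, kroneckerMap_apply,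
      Complex.real_smul, Complex.ofReal_mul]
    ring
  rw [key]
  exact (kron_psd h₁ (smul_psd hB₂ hl₂)).add (kron_psd hA₁ h₂)

lemma S_kron_lb (hA₁ : A₁.PosSemidef) (hB₁ : B₁.PosSemidef) (hA₂ : A₂.PosSemidef)
    (hB₂ : B₂.PosSemidef) {l c₁ c₂ : ℝ}
    (hl : (l • (B₁ ⊗ₖ B₂) - A₁ ⊗ₖ A₂).PosSemidef)
    (hc₁ : 0 < c₁) (hc₂ : 0 < c₂)
    (h₁ : ¬(c₁ • B₁ - A₁).PosSemidef) (h₂ : ¬(c₂ • B₂ - A₂).PosSemidef) :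
    c₁ * c₂ ≤ l := by
  rw [mem_S_iff hA₁.1 hB₁.1] at h₁
  rw [mem_S_iff hA₂.1 hB₂.1] at h₂
  push_neg at h₁ h₂
  obtain ⟨x, hx⟩ := h₁
  obtain ⟨y, hy⟩ := h₂
  have hq := (mem_S_iff (kron_psd hA₁ hA₂).1 (kron_psd hB₁ hB₂).1 l).mp hl
    (fun p : n × m => x p.1 * y p.2)
  rw [qf_kron_re hA₁.1 hA₂.1, qf_kron_re hB₁.1 hB₂.1] at hq
  set a₁ := (star x ⬝ᵥ A₁ *ᵥ x).re
  set b₁ := (star x ⬝ᵥ B₁ *ᵥ x).re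
  set a₂ := (star y ⬝ᵥ A₂ *ᵥ y).re
  set b₂ := (star y ⬝ᵥ B₂ *ᵥ y).re
  have hb₁ : 0 ≤ b₁ := psd_re_nonneg hB₁ x
  have hb₂ : 0 ≤ b₂ := psd_re_nonneg hB₂ y
  have ha₁ : 0 < a₁ := lt_of_le_of_lt (mul_nonneg hc₁.le hb₁) hx
  have ha₂ : 0 < a₂ := lt_of_le_of_lt (mul_nonneg hc₂.le hb₂) hy
  have hbb : 0 < b₁ * b₂ := by
    rcases lt_or_eq_of_le (mul_nonneg hb₁ hb₂) with h | h
    · exact h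
    · exfalso
      rw [← h, mul_zero] at hq
      nlinarith [mul_pos ha₁ ha₂]
  have hlt : (c₁ * c₂) * (b₁ * b₂) < l * (b₁ * b₂) := by
    nlinarith [mul_lt_mul'' hx hy (mul_nonneg hc₁.le hb₁) (mul_nonneg hc₂.le hb₂)]
  exact le_of_lt ((mul_lt_mul_iff_left₀ hbb).mp hlt)

lemma S_kron_empty_left (hA₁ : A₁.PosSemidef) (hB₁ : B₁.PosSemidef) (hA₂ : A₂.PosSemidef)
    (hB₂ : B₂.PosSemidef) (hA₂0 : A₂ ≠ 0)
    (h1 : ∀ c : ℝ, ¬(c • B₁ - A₁).PosSemidef) (l : ℝ) :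
    ¬(l • (B₁ ⊗ₖ B₂) - A₁ ⊗ₖ A₂).PosSemidef := by
  intro hl
  obtain ⟨y, hy⟩ := exists_pos_qf hA₂ hA₂0
  have hb₂ : 0 ≤ (star y ⬝ᵥ B₂ *ᵥ y).re := psd_re_nonneg hB₂ y
  have hqall := (mem_S_iff (kron_psd hA₁ hA₂).1 (kron_psd hB₁ hB₂).1 l).mp hl
  by_cases hb0 : (star y ⬝ᵥ B₂ *ᵥ y).re = 0
  · have h0 := h1 0
    rw [mem_S_iff hA₁.1 hB₁.1] at h0
    push_neg at h0
    obtain ⟨x, hx⟩ := h0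
    have hq := hqall (fun p : n × m => x p.1 * y p.2)
    rw [qf_kron_re hA₁.1 hA₂.1, qf_kron_re hB₁.1 hB₂.1, hb0, mul_zero, mul_zero] at hq
    rw [zero_mul] at hx
    nlinarith [mul_pos hx hy]
  · have hb₂pos : 0 < (star y ⬝ᵥ B₂ *ᵥ y).re := lt_of_le_of_ne hb₂ (Ne.symm hb0)
    have hc := h1 (l * (star y ⬝ᵥ B₂ *ᵥ y).re / (star y ⬝ᵥ A₂ *ᵥ y).re)
    rw [mem_S_iff hA₁.1 hB₁.1] at hc
    push_neg at hc
    obtain ⟨x, hx⟩ := hc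
    have hq := hqall (fun p : n × m => x p.1 * y p.2)
    rw [qf_kron_re hA₁.1 hA₂.1, qf_kron_re hB₁.1 hB₂.1] at hq
    set a₁ := (star x ⬝ᵥ A₁ *ᵥ x).re
    set b₁ := (star x ⬝ᵥ B₁ *ᵥ x).re
    set a₂ := (star y ⬝ᵥ A₂ *ᵥ y).re
    set b₂ := (star y ⬝ᵥ B₂ *ᵥ y).re
    have h4 : (l * b₂ / a₂ * b₁) * a₂ < a₁ * a₂ := mul_lt_mul_of_pos_right hx hy
    have h5 : (l * b₂ / a₂ * b₁) * a₂ = l * (b₁ * b₂) := by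
      field_simp
    linarith [hq, h4, h5.symm.trans_lt h4]

lemma kron_ne_zero (hA₁ : A₁.PosSemidef) (hA₂ : A₂.PosSemidef) (h1 : A₁ ≠ 0) (h2 : A₂ ≠ 0) :
    A₁ ⊗ₖ A₂ ≠ 0 := by
  obtain ⟨x, hx⟩ := exists_pos_qf hA₁ h1
  obtain ⟨y, hy⟩ := exists_pos_qf hA₂ h2
  intro h
  have := qf_kron_re hA₁.1 hA₂.1 x y
  rw [h] at this
  simp only [Matrix.zero_mulVec, dotProduct_zero, Complex.zero_re] at this
  nlinarith

end Kron

section Kron2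

variable {m : Type*} [Fintype m] [DecidableEq m]
variable {A₁ B₁ : Matrix n n ℂ} {A₂ B₂ : Matrix m m ℂ}

lemma S_kron_empty_right (hA₁ : A₁.PosSemidef) (hB₁ : B₁.PosSemidef) (hA₂ : A₂.PosSemidef)
    (hB₂ : B₂.PosSemidef) (hA₁0 : A₁ ≠ 0)
    (h2 : ∀ c : ℝ, ¬(c • B₂ - A₂).PosSemidef) (l : ℝ) :
    ¬(l • (B₁ ⊗ₖ B₂) - A₁ ⊗ₖ A₂).PosSemidef := by
  intro hl
  obtain ⟨x, hx⟩ := exists_pos_qf hA₁ hA₁0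
  have hb₁ : 0 ≤ (star x ⬝ᵥ B₁ *ᵥ x).re := psd_re_nonneg hB₁ x
  have hqall := (mem_S_iff (kron_psd hA₁ hA₂).1 (kron_psd hB₁ hB₂).1 l).mp hl
  by_cases hb0 : (star x ⬝ᵥ B₁ *ᵥ x).re = 0
  · have h0 := h2 0
    rw [mem_S_iff hA₂.1 hB₂.1] at h0
    push_neg at h0
    obtain ⟨y, hy⟩ := h0
    have hq := hqall (fun p : n × m => x p.1 * y p.2)
    rw [qf_kron_re hA₁.1 hA₂.1, qf_kron_re hB₁.1 hB₂.1, hb0, zero_mul, mul_zero] at hq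
    rw [zero_mul] at hy
    nlinarith [mul_pos hx hy]
  · have hb₁pos : 0 < (star x ⬝ᵥ B₁ *ᵥ x).re := lt_of_le_of_ne hb₁ (Ne.symm hb0)
    have hc := h2 (l * (star x ⬝ᵥ B₁ *ᵥ x).re / (star x ⬝ᵥ A₁ *ᵥ x).re)
    rw [mem_S_iff hA₂.1 hB₂.1] at hc
    push_neg at hc
    obtain ⟨y, hy⟩ := hc
    have hq := hqall (fun p : n × m => x p.1 * y p.2)
    rw [qf_kron_re hA₁.1 hA₂.1, qf_kron_re hB₁.1 hB₂.1] at hq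
    set a₁ := (star x ⬝ᵥ A₁ *ᵥ x).re
    set b₁ := (star x ⬝ᵥ B₁ *ᵥ x).re
    set a₂ := (star y ⬝ᵥ A₂ *ᵥ y).re
    set b₂ := (star y ⬝ᵥ B₂ *ᵥ y).re
    have h4 : (l * b₁ / a₁ * b₂) * a₁ < a₂ * a₁ := mul_lt_mul_of_pos_right hy hx
    have h5 : (l * b₁ / a₁ * b₂) * a₁ = l * (b₁ * b₂) := by
      field_simp
    nlinarith [hq, h4, h5]

lemma msup_kron_top_iff (hA₁ : A₁.PosSemidef) (hB₁ : B₁.PosSemidef) (hA₂ : A₂.PosSemidef)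
    (hB₂ : B₂.PosSemidef) (hA₁0 : A₁ ≠ 0) (hA₂0 : A₂ ≠ 0) :
    msupRatio (A₁ ⊗ₖ A₂) (B₁ ⊗ₖ B₂) = ⊤ ↔ msupRatio A₁ B₁ = ⊤ ∨ msupRatio A₂ B₂ = ⊤ := by
  rw [msup_eq_top_iff, msup_eq_top_iff, msup_eq_top_iff]
  constructor
  · intro h
    by_contra hor
    push_neg at hor
    obtain ⟨h1ne, h2ne⟩ := hor
    obtain ⟨l₁, hl₁⟩ := h1ne
    obtain ⟨l₂, hl₂⟩ := h2ne
    obtain ⟨c₂, hc₂, hlb₂⟩ := S_lb hA₂ hB₂ hA₂0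
    have hmem : ((l₁ * l₂) • (B₁ ⊗ₖ B₂) - A₁ ⊗ₖ A₂).PosSemidef :=
      S_kron_mem hA₁ hB₂ hl₁ hl₂ (le_trans hc₂.le (hlb₂ l₂ hl₂))
    rw [Set.eq_empty_iff_forall_notMem] at h
    exact h _ hmem
  · intro h
    rw [Set.eq_empty_iff_forall_notMem]
    intro l hl
    rcases h with h | h
    · rw [Set.eq_empty_iff_forall_notMem] at h
      exact S_kron_empty_left hA₁ hB₁ hA₂ hB₂ hA₂0 (fun c => h c) l hl
    · rw [Set.eq_empty_iff_forall_notMem] at h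
      exact S_kron_empty_right hA₁ hB₁ hA₂ hB₂ hA₁0 (fun c => h c) l hl

lemma msup_pos {A B : Matrix n n ℂ} (hA : A.PosSemidef) (hB : B.PosSemidef) (hA0 : A ≠ 0)
    (h : msupRatio A B ≠ ⊤) :
    msupRatio A B = (((msupRatio A B).toReal : ℝ) : EReal) ∧ 0 < (msupRatio A B).toReal := by
  have hS : {l : ℝ | (l • B - A).PosSemidef}.Nonempty :=
    Set.nonempty_iff_ne_empty.mpr (fun he => h ((msup_eq_top_iff _ _).mpr he))
  obtain ⟨c, hc, hlb⟩ := S_lb hA hB hA0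
  have hbd : BddBelow {l : ℝ | (l • B - A).PosSemidef} := ⟨c, fun l hl => hlb l hl⟩
  rw [msup_coe hS hbd, EReal.toReal_coe]
  exact ⟨rfl, lt_of_lt_of_le hc (le_csInf hS hlb)⟩

lemma msup_kron_finite (hA₁ : A₁.PosSemidef) (hB₁ : B₁.PosSemidef) (hA₂ : A₂.PosSemidef)
    (hB₂ : B₂.PosSemidef) (hA₁0 : A₁ ≠ 0) (hA₂0 : A₂ ≠ 0)
    (h1 : msupRatio A₁ B₁ ≠ ⊤) (h2 : msupRatio A₂ B₂ ≠ ⊤) :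
    msupRatio (A₁ ⊗ₖ A₂) (B₁ ⊗ₖ B₂)
      = (((msupRatio A₁ B₁).toReal * (msupRatio A₂ B₂).toReal : ℝ) : EReal) := by
  have hS₁ : {l : ℝ | (l • B₁ - A₁).PosSemidef}.Nonempty :=
    Set.nonempty_iff_ne_empty.mpr (fun he => h1 ((msup_eq_top_iff _ _).mpr he))
  have hS₂ : {l : ℝ | (l • B₂ - A₂).PosSemidef}.Nonempty :=
    Set.nonempty_iff_ne_empty.mpr (fun he => h2 ((msup_eq_top_iff _ _).mpr he))
  obtain ⟨c₁, hc₁, hlb₁⟩ := S_lb hA₁ hB₁ hA₁0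
  obtain ⟨c₂, hc₂, hlb₂⟩ := S_lb hA₂ hB₂ hA₂0
  have hbd₁ : BddBelow {l : ℝ | (l • B₁ - A₁).PosSemidef} := ⟨c₁, fun l hl => hlb₁ l hl⟩
  have hbd₂ : BddBelow {l : ℝ | (l • B₂ - A₂).PosSemidef} := ⟨c₂, fun l hl => hlb₂ l hl⟩
  have hKne : (A₁ ⊗ₖ A₂) ≠ 0 := kron_ne_zero hA₁ hA₂ hA₁0 hA₂0
  obtain ⟨cK, hcK, hlbK⟩ := S_lb (kron_psd hA₁ hA₂) (kron_psd hB₁ hB₂) hKne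
  have hbdK : BddBelow {l : ℝ | (l • (B₁ ⊗ₖ B₂) - A₁ ⊗ₖ A₂).PosSemidef} :=
    ⟨cK, fun l hl => hlbK l hl⟩
  have hSK : {l : ℝ | (l • (B₁ ⊗ₖ B₂) - A₁ ⊗ₖ A₂).PosSemidef}.Nonempty := by
    obtain ⟨l₁, hl₁⟩ := hS₁
    obtain ⟨l₂, hl₂⟩ := hS₂
    exact ⟨l₁ * l₂, S_kron_mem hA₁ hB₂ hl₁ hl₂ (le_trans hc₂.le (hlb₂ l₂ hl₂))⟩
  set r₁ := sInf {l : ℝ | (l • B₁ - A₁).PosSemidef} with hr₁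
  set r₂ := sInf {l : ℝ | (l • B₂ - A₂).PosSemidef} with hr₂
  have hr₁pos : 0 < r₁ := lt_of_lt_of_le hc₁ (le_csInf hS₁ hlb₁)
  have hr₂pos : 0 < r₂ := lt_of_lt_of_le hc₂ (le_csInf hS₂ hlb₂)
  rw [msup_coe hS₁ hbd₁, msup_coe hS₂ hbd₂, msup_coe hSK hbdK, EReal.toReal_coe,
    EReal.toReal_coe, ← hr₁, ← hr₂]
  rw [EReal.coe_eq_coe_iff]
  apply le_antisymm
  · have step : ∀ l₂ ∈ {l : ℝ | (l • B₂ - A₂).PosSemidef},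
        sInf {l : ℝ | (l • (B₁ ⊗ₖ B₂) - A₁ ⊗ₖ A₂).PosSemidef} ≤ r₁ * l₂ := by
      intro l₂ hl₂
      have hl₂pos : 0 < l₂ := lt_of_lt_of_le hc₂ (hlb₂ l₂ hl₂)
      have h6 : ∀ l₁ ∈ {l : ℝ | (l • B₁ - A₁).PosSemidef},
          sInf {l : ℝ | (l • (B₁ ⊗ₖ B₂) - A₁ ⊗ₖ A₂).PosSemidef} / l₂ ≤ l₁ := by
        intro l₁ hl₁
        have hm : (l₁ * l₂) ∈ {l : ℝ | (l • (B₁ ⊗ₖ B₂) - A₁ ⊗ₖ A₂).PosSemidef} :=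
          S_kron_mem hA₁ hB₂ hl₁ hl₂ hl₂pos.le
        rw [div_le_iff₀ hl₂pos]
        exact csInf_le hbdK hm
      have h7 := le_csInf hS₁ h6
      rw [div_le_iff₀ hl₂pos] at h7
      exact h7
    have h8 : ∀ l₂ ∈ {l : ℝ | (l • B₂ - A₂).PosSemidef},
        sInf {l : ℝ | (l • (B₁ ⊗ₖ B₂) - A₁ ⊗ₖ A₂).PosSemidef} / r₁ ≤ l₂ := by
      intro l₂ hl₂
      rw [div_le_iff₀ hr₁pos, mul_comm l₂ r₁]
      exact step l₂ hl₂
    have h9 := le_csInf hS₂ h8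
    rw [div_le_iff₀ hr₁pos] at h9
    rwa [mul_comm r₂ r₁] at h9
  · refine le_csInf hSK ?_
    intro l hl
    by_contra hlt
    push_neg at hlt
    have hl0 : 0 < l := lt_of_lt_of_le hcK (hlbK l hl)
    obtain ⟨t, ht1, ht2⟩ := exists_between hlt
    have hrr : 0 < r₁ * r₂ := mul_pos hr₁pos hr₂pos
    have ht0 : 0 < t := lt_trans hl0 ht1
    set s := Real.sqrt (t / (r₁ * r₂)) with hs
    have hs0 : 0 < s := Real.sqrt_pos.mpr (div_pos ht0 hrr)
    have hs1 : s < 1 := by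
      rw [hs, Real.sqrt_lt' one_pos]
      rw [one_pow]
      exact (div_lt_one hrr).mpr ht2
    have hss : s * s = t / (r₁ * r₂) := Real.mul_self_sqrt (div_pos ht0 hrr).le
    have hcc : (r₁ * s) * (r₂ * s) = t := by
      rw [show (r₁ * s) * (r₂ * s) = (r₁ * r₂) * (s * s) by ring, hss]
      field_simp
    have hnm₁ : ¬((r₁ * s) • B₁ - A₁).PosSemidef := by
      intro hmem
      have := csInf_le hbd₁ hmem
      nlinarith
    have hnm₂ : ¬((r₂ * s) • B₂ - A₂).PosSemidef := by
      intro hmem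
      have := csInf_le hbd₂ hmem
      nlinarith
    have hfin := S_kron_lb hA₁ hB₁ hA₂ hB₂ hl (mul_pos hr₁pos hs0) (mul_pos hr₂pos hs0) hnm₁ hnm₂
    rw [hcc] at hfin
    exact absurd hfin (not_le.mpr ht1)

end Kron2

end Aux

lemma mHilbert_ne_bot (A B : Matrix n n ℂ) : mHilbert A B ≠ ⊥ := by
  unfold mHilbert
  split_ifs
  · simp
  · exact EReal.coe_ne_bot _

open Kronecker in
/-- **Additivity of Hilbert's projective metric on tensor (Kronecker) products.** -/
theorem mHilbert_kronecker_add
    {d₁ d₂ : ℕ} (A₁ B₁ : Matrix (Fin d₁) (Fin d₁) ℂ) (A₂ B₂ : Matrix (Fin d₂) (Fin d₂) ℂ)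
    (hA₁ : A₁.PosSemidef) (hB₁ : B₁.PosSemidef) (hA₂ : A₂.PosSemidef) (hB₂ : B₂.PosSemidef)
    (hA₁0 : A₁ ≠ 0) (hB₁0 : B₁ ≠ 0) (hA₂0 : A₂ ≠ 0) (hB₂0 : B₂ ≠ 0) :
    mHilbert (A₁ ⊗ₖ A₂) (B₁ ⊗ₖ B₂) = mHilbert A₁ B₁ + mHilbert A₂ B₂ := by
  have t1 := msup_kron_top_iff hA₁ hB₁ hA₂ hB₂ hA₁0 hA₂0
  have t2 := msup_kron_top_iff hB₁ hA₁ hB₂ hA₂ hB₁0 hB₂0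
  by_cases htop : msupRatio A₁ B₁ = ⊤ ∨ msupRatio B₁ A₁ = ⊤ ∨ msupRatio A₂ B₂ = ⊤ ∨
      msupRatio B₂ A₂ = ⊤
  · have hL : mHilbert (A₁ ⊗ₖ A₂) (B₁ ⊗ₖ B₂) = ⊤ := by
      unfold mHilbert
      rw [if_pos]
      rcases htop with h | h | h | h
      · exact Or.inl (t1.mpr (Or.inl h))
      · exact Or.inr (t2.mpr (Or.inl h))
      · exact Or.inl (t1.mpr (Or.inr h))
      · exact Or.inr (t2.mpr (Or.inr h))
    rw [hL]
    rcases htop with h | h | h | h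
    · have : mHilbert A₁ B₁ = ⊤ := by unfold mHilbert; rw [if_pos (Or.inl h)]
      rw [this, EReal.top_add_of_ne_bot (mHilbert_ne_bot _ _)]
    · have : mHilbert A₁ B₁ = ⊤ := by unfold mHilbert; rw [if_pos (Or.inr h)]
      rw [this, EReal.top_add_of_ne_bot (mHilbert_ne_bot _ _)]
    · have : mHilbert A₂ B₂ = ⊤ := by unfold mHilbert; rw [if_pos (Or.inl h)]
      rw [this, EReal.add_top_of_ne_bot (mHilbert_ne_bot _ _)]
    · have : mHilbert A₂ B₂ = ⊤ := by unfold mHilbert; rw [if_pos (Or.inr h)]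
      rw [this, EReal.add_top_of_ne_bot (mHilbert_ne_bot _ _)]
  · push_neg at htop
    obtain ⟨n1, n1', n2, n2'⟩ := htop
    obtain ⟨e1, p1pos⟩ := msup_pos hA₁ hB₁ hA₁0 n1
    obtain ⟨e1', q1pos⟩ := msup_pos hB₁ hA₁ hB₁0 n1'
    obtain ⟨e2, p2pos⟩ := msup_pos hA₂ hB₂ hA₂0 n2
    obtain ⟨e2', q2pos⟩ := msup_pos hB₂ hA₂ hB₂0 n2'
    have k1 := msup_kron_finite hA₁ hB₁ hA₂ hB₂ hA₁0 hA₂0 n1 n2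
    have k2 := msup_kron_finite hB₁ hA₁ hB₂ hA₂ hB₁0 hB₂0 n1' n2'
    have hk1top : msupRatio (A₁ ⊗ₖ A₂) (B₁ ⊗ₖ B₂) ≠ ⊤ := by
      rw [k1]; exact EReal.coe_ne_top _
    have hk2top : msupRatio (B₁ ⊗ₖ B₂) (A₁ ⊗ₖ A₂) ≠ ⊤ := by
      rw [k2]; exact EReal.coe_ne_top _
    unfold mHilbert
    rw [if_neg (not_or.mpr ⟨hk1top, hk2top⟩), if_neg (not_or.mpr ⟨n1, n1'⟩),
      if_neg (not_or.mpr ⟨n2, n2'⟩), k1, k2, EReal.toReal_coe, EReal.toReal_coe,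
      ← EReal.coe_add, EReal.coe_eq_coe_iff]
    set p1 := (msupRatio A₁ B₁).toReal
    set q1 := (msupRatio B₁ A₁).toReal
    set p2 := (msupRatio A₂ B₂).toReal
    set q2 := (msupRatio B₂ A₂).toReal
    rw [show (p1 * p2) * (q1 * q2) = (p1 * q1) * (p2 * q2) by ring,
      Real.log_mul (ne_of_gt (mul_pos p1pos q1pos)) (ne_of_gt (mul_pos p2pos q2pos))]

end
end

section
/- Let C ⊆ V be a proper cone and T : V → V a linear map with T(C) ⊆ C such that T(c) = c for some nonzero c ∈ C and Δ(T) < ∞. If λ ∈ ℂ and a is a nonzero element of the complexification V ⊗_ℝ ℂ with (T ⊗ id)(a) = λ·a and a is not a complex scalar multiple of c, then |λ| ≤ tanh(Δ(T)/4). -/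
noncomputable section

variable {V : Type*} [NormedAddCommGroup V] [InnerProductSpace ℝ V]

/-- A proper cone: closed, convex, closed under nonnegative scaling, pointed and solid. -/
def IsProperCone (C : Set V) : Prop :=
  IsClosed C ∧ Convex ℝ C ∧ (∀ (r : ℝ), 0 ≤ r → ∀ x ∈ C, r • x ∈ C) ∧
    (C ∩ (-C) = {0}) ∧ (Submodule.span ℝ C = ⊤)

/-- `sup_C(a/b) := inf {λ : ℝ | λ • b - a ∈ C}`, as an extended real (`⊤` if no such `λ`). -/
def supRatio (C : Set V) (a b : V) : EReal :=
  sInf ((fun l : ℝ => (l : EReal)) '' {l : ℝ | l • b - a ∈ C})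

/-- `inf_C(a/b) := sup {λ : ℝ | a - λ • b ∈ C}`. -/
def infRatio (C : Set V) (a b : V) : EReal :=
  sSup ((fun l : ℝ => (l : EReal)) '' {l : ℝ | a - l • b ∈ C})

/-- Hilbert's projective metric `h_C(a,b) = ln (sup_C(a/b) * sup_C(b/a)) ∈ [0,∞]`. -/
def hilbertDist (C : Set V) (a b : V) : EReal :=
  if supRatio C a b = ⊤ ∨ supRatio C b a = ⊤ then ⊤
  else ((Real.log ((supRatio C a b).toReal * (supRatio C b a).toReal) : ℝ) : EReal)

/-- The oscillation `osc_C(a/b) = sup_C(a/b) - inf_C(a/b)`. -/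
def oscRatio (C : Set V) (a b : V) : EReal :=
  supRatio C a b - infRatio C a b

variable {V' : Type*} [NormedAddCommGroup V'] [InnerProductSpace ℝ V']

/-- The projective diameter `Δ(T)` of a cone-preserving linear map `T`. -/
def projDiam (C : Set V) (C' : Set V') (T : V →ₗ[ℝ] V') : EReal :=
  ⨆ (a : V) (_ : a ∈ C \ {0}) (b : V) (_ : b ∈ C \ {0}), hilbertDist C' (T a) (T b)

/-- `tanh(x/2)`, with the convention `tanh(⊤/2) = 1`. -/
def tanhHalf (x : EReal) : ℝ :=
  if x = ⊤ then 1 else Real.tanh (x.toReal / 2)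

/-- The dual cone of `C` (identifying `V` with its dual via the inner product). -/
def dualConeSet (C : Set V) : Set V := {w : V | ∀ c ∈ C, 0 ≤ (inner ℝ w c : ℝ)}

/-- The base norm `‖v‖_B` induced by the cone `C` and the functional `⟨e, ·⟩`. -/
def baseNorm (C : Set V) (e : V) (v : V) : ℝ :=
  sInf {r : ℝ | ∃ cp ∈ C, ∃ cm ∈ C, v = cp - cm ∧ r = (inner ℝ e cp : ℝ) + (inner ℝ e cm : ℝ)}

/-- The negativity `N_B(v)` induced by the cone `C` and the functional `⟨e, ·⟩`. -/
def negativity (C : Set V) (e : V) (v : V) : ℝ :=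
  sInf {r : ℝ | ∃ cp ∈ C, ∃ cm ∈ C, v = cp - cm ∧ r = (inner ℝ e cm : ℝ)}


section Auxiliary

namespace SBPD

variable {C : Set V} {c : V}

lemma cone_smul (hC : IsProperCone C) {r : ℝ} (hr : 0 ≤ r) {x : V} (hx : x ∈ C) : r • x ∈ C :=
  hC.2.2.1 r hr x hx

lemma cone_add (hC : IsProperCone C) {x y : V} (hx : x ∈ C) (hy : y ∈ C) : x + y ∈ C := by
  have h := hC.2.1 hx hy (by norm_num : (0:ℝ) ≤ 1/2) (by norm_num : (0:ℝ) ≤ 1/2) (by norm_num)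
  have h2 := cone_smul hC (by norm_num : (0:ℝ) ≤ 2) h
  have e : (2:ℝ) • ((1/2:ℝ) • x + (1/2:ℝ) • y) = x + y := by module
  rwa [e] at h2

lemma cone_zero (hC : IsProperCone C) : (0:V) ∈ C := by
  have : (0:V) ∈ C ∩ (-C) := by rw [hC.2.2.2.1]; rfl
  exact this.1

lemma cone_eq_zero (hC : IsProperCone C) {x : V} (hx : x ∈ C) (hx' : -x ∈ C) : x = 0 := by
  have : x ∈ C ∩ (-C) := ⟨hx, by simpa [Set.mem_neg] using hx'⟩
  rwa [hC.2.2.2.1] at this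

lemma coeff_nonneg (hC : IsProperCone C) (hcC : c ∈ C) (hc0 : c ≠ 0)
    {t : ℝ} (ht : t • c ∈ C) : 0 ≤ t := by
  by_contra h
  push_neg at h
  have h2 : (-t) • c ∈ C := cone_smul hC (by linarith) hcC
  have h3 : t • c = 0 := cone_eq_zero hC ht (by simpa [neg_smul] using h2)
  rcases smul_eq_zero.mp h3 with h' | h'
  · linarith
  · exact hc0 h'

lemma exists_decomp (hC : IsProperCone C) (v : V) : ∃ p ∈ C, ∃ q ∈ C, v = p - q := by
  let W : Submodule ℝ V :=
    { carrier := {v | ∃ p ∈ C, ∃ q ∈ C, v = p - q}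
      add_mem' := by
        rintro x y ⟨p, hp, q, hq, rfl⟩ ⟨p', hp', q', hq', rfl⟩
        exact ⟨p + p', cone_add hC hp hp', q + q', cone_add hC hq hq', by abel⟩
      zero_mem' := ⟨0, cone_zero hC, 0, cone_zero hC, by simp⟩
      smul_mem' := by
        rintro r x ⟨p, hp, q, hq, rfl⟩
        rcases le_or_gt 0 r with hr | hr
        · exact ⟨r • p, cone_smul hC hr hp, r • q, cone_smul hC hr hq, by module⟩
        · exact ⟨(-r) • q, cone_smul hC (by linarith) hq, (-r) • p,
            cone_smul hC (by linarith) hp, by module⟩ }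
  have hsub : C ⊆ W := fun x hx => ⟨x, hx, 0, cone_zero hC, by simp⟩
  have hs : Submodule.span ℝ C ≤ W := Submodule.span_le.mpr hsub
  have : v ∈ W := hs (by rw [hC.2.2.2.2]; trivial)
  exact this


lemma supRatio_attain (hC : IsProperCone C) {y z : V} (hy : y ∈ C) (hz : z ∈ C)
    (hy0 : y ≠ 0) (hz0 : z ≠ 0) (htop : supRatio C y z ≠ ⊤) :
    ∃ β : ℝ, 0 < β ∧ β • z - y ∈ C ∧ supRatio C y z = (β : EReal) := by
  set S := {l : ℝ | l • z - y ∈ C} with hSdef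
  have hpos : ∀ l ∈ S, 0 < l := by
    intro l hl
    rcases lt_or_ge 0 l with h | h
    · exact h
    exfalso
    have hsum : l • z ∈ C := by
      have := cone_add hC hl hy
      simpa using this
    rcases h.lt_or_eq with h' | h'
    · have h2 : (-l) • z ∈ C := cone_smul hC (by linarith) hz
      have h3 : l • z = 0 := cone_eq_zero hC hsum (by simpa [neg_smul] using h2)
      rcases smul_eq_zero.mp h3 with h'' | h''
      · exact absurd h'' (by linarith)
      · exact hz0 h''
    · have h2 : -y ∈ C := by
        have : l • z - y ∈ C := hl
        rw [h'] at this
        simpa using this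
      exact hy0 (cone_eq_zero hC hy h2)
  have hne : S.Nonempty := by
    by_contra h
    apply htop
    rw [supRatio, ← hSdef, Set.not_nonempty_iff_eq_empty.mp h]
    simp
  have hbdd : BddBelow S := ⟨0, fun l hl => (hpos l hl).le⟩
  have hclosed : IsClosed S := by
    have : S = (fun l : ℝ => l • z - y) ⁻¹' C := rfl
    rw [this]
    exact hC.1.preimage (by continuity)
  have hmem : sInf S ∈ S := hclosed.csInf_mem hne hbdd
  refine ⟨sInf S, hpos _ hmem, hmem, ?_⟩
  apply le_antisymm
  · exact sInf_le ⟨sInf S, hmem, rfl⟩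
  · apply le_sInf
    rintro x ⟨l, hl, rfl⟩
    exact EReal.coe_le_coe_iff.mpr (csInf_le hbdd hl)

lemma supRatio_self (hC : IsProperCone C) (hcC : c ∈ C) (hc0 : c ≠ 0) :
    supRatio C c c = ((1:ℝ) : EReal) := by
  have h1 : (1:ℝ) ∈ {l : ℝ | l • c - c ∈ C} := by
    simp only [Set.mem_setOf_eq, one_smul, sub_self]
    exact cone_zero hC
  apply le_antisymm
  · exact sInf_le ⟨1, h1, rfl⟩
  · apply le_sInf
    rintro x ⟨l, hl, rfl⟩
    have : (l - 1) • c ∈ C := by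
      have : l • c - c ∈ C := hl
      rwa [show l • c - c = (l - 1) • c from by module] at this
    have h2 := coeff_nonneg hC hcC hc0 this
    show ((1:ℝ) : EReal) ≤ (l : EReal)
    exact EReal.coe_le_coe_iff.mpr (by linarith)

lemma ereal_le_toReal {x : ℝ} {y : EReal} (h : (x : EReal) ≤ y) (hy : y ≠ ⊤) :
    x ≤ y.toReal := by
  have hyb : y ≠ ⊥ := by
    intro hb
    rw [hb, le_bot_iff] at h
    exact (EReal.coe_ne_bot x) h
  rw [← EReal.coe_toReal hy hyb] at h
  exact_mod_cast h

lemma key_ineq {α β s : ℝ} (hα : 0 < α) (hαβ : α ≤ β) (hs : 1 ≤ s)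
    (hβs : β ≤ s ^ 2 * α) : β / (1 + β) - α / (1 + α) ≤ (s - 1) / (s + 1) := by
  have hβ0 : 0 < β := lt_of_lt_of_le hα hαβ
  have h1α : (0:ℝ) < 1 + α := by linarith
  have h1β : (0:ℝ) < 1 + β := by linarith
  have hs1 : (0:ℝ) < s + 1 := by linarith
  rw [div_sub_div _ _ h1β.ne' h1α.ne', div_le_div_iff₀ (by positivity) hs1]
  rcases eq_or_lt_of_le hs with rfl | hs'
  · have : β = α := le_antisymm (by nlinarith) hαβ
    subst this
    ring_nf
    nlinarith [sq_nonneg β]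
  · nlinarith [mul_nonneg (mul_nonneg (by linarith : (0:ℝ) ≤ s - 1) (sq_nonneg (1 + α)))
      (by linarith : (0:ℝ) ≤ s ^ 2 * α - β),
      mul_nonneg (mul_nonneg (by linarith : (0:ℝ) ≤ s - 1) (sq_nonneg (1 - s * α)))
      (by linarith : (0:ℝ) ≤ β - α),
      mul_pos (by nlinarith : (0:ℝ) < s ^ 2 - 1) hα]

lemma tanh_quarter_eq (D : ℝ) :
    Real.tanh (D / 4) = (Real.exp (D / 2) - 1) / (Real.exp (D / 2) + 1) := by
  rw [Real.tanh_eq_sinh_div_cosh, Real.sinh_eq, Real.cosh_eq]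
  have h1 : Real.exp (D / 2) = Real.exp (D / 4) * Real.exp (D / 4) := by
    rw [← Real.exp_add]; ring_nf
  rw [Real.exp_neg, h1]
  have hp : 0 < Real.exp (D / 4) := Real.exp_pos _
  have h2 : Real.exp (D / 4) + (Real.exp (D / 4))⁻¹ ≠ 0 := by positivity
  have h3 : Real.exp (D / 4) * Real.exp (D / 4) + 1 ≠ 0 := by positivity
  field_simp

lemma tanh_nonneg' {x : ℝ} (hx : 0 ≤ x) : 0 ≤ Real.tanh x := by
  rw [Real.tanh_eq_sinh_div_cosh]
  positivity


/-- `v` is order-bounded with respect to the cone `C` and the unit `c`. -/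
def Bdd (C : Set V) (c : V) (v : V) : Prop :=
  ∃ m M : ℝ, v - m • c ∈ C ∧ M • c - v ∈ C

/-- The oscillation seminorm of `v` with respect to `C` and the unit `c`. -/
def oscP (C : Set V) (c : V) (v : V) : ℝ :=
  sInf {d : ℝ | ∃ m M : ℝ, v - m • c ∈ C ∧ M • c - v ∈ C ∧ d = M - m}

lemma witness_nonneg (hC : IsProperCone C) (hcC : c ∈ C) (hc0 : c ≠ 0) {v : V} {m M : ℝ}
    (hm : v - m • c ∈ C) (hM : M • c - v ∈ C) : 0 ≤ M - m := by
  have h := cone_add hC hm hM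
  rw [show v - m • c + (M • c - v) = (M - m) • c from by module] at h
  exact coeff_nonneg hC hcC hc0 h

lemma oscP_bddBelow (hC : IsProperCone C) (hcC : c ∈ C) (hc0 : c ≠ 0) (v : V) :
    ∀ d ∈ {d : ℝ | ∃ m M : ℝ, v - m • c ∈ C ∧ M • c - v ∈ C ∧ d = M - m}, 0 ≤ d := by
  rintro d ⟨m, M, hm, hM, rfl⟩
  exact witness_nonneg hC hcC hc0 hm hM

lemma oscP_le (hC : IsProperCone C) (hcC : c ∈ C) (hc0 : c ≠ 0) {v : V} {m M : ℝ}
    (hm : v - m • c ∈ C) (hM : M • c - v ∈ C) : oscP C c v ≤ M - m :=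
  csInf_le ⟨0, fun _ hd => oscP_bddBelow hC hcC hc0 v _ hd⟩ ⟨m, M, hm, hM, rfl⟩

lemma oscP_nonneg (hC : IsProperCone C) (hcC : c ∈ C) (hc0 : c ≠ 0) (v : V) :
    0 ≤ oscP C c v :=
  Real.sInf_nonneg (oscP_bddBelow hC hcC hc0 v)

lemma oscP_attain (hC : IsProperCone C) (hcC : c ∈ C) (hc0 : c ≠ 0) {v : V}
    (hb : Bdd C c v) :
    ∃ m M : ℝ, v - m • c ∈ C ∧ M • c - v ∈ C ∧ M - m ≤ oscP C c v := by
  obtain ⟨m0, M0, hm0, hM0⟩ := hb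
  set A := {m : ℝ | v - m • c ∈ C} with hA
  set B := {M : ℝ | M • c - v ∈ C} with hB
  have hAcl : IsClosed A := hC.1.preimage (by continuity : Continuous fun m : ℝ => v - m • c)
  have hBcl : IsClosed B := hC.1.preimage (by continuity : Continuous fun M : ℝ => M • c - v)
  have hAne : A.Nonempty := ⟨m0, hm0⟩
  have hBne : B.Nonempty := ⟨M0, hM0⟩
  have hAbdd : BddAbove A := ⟨M0, fun m hm => by
    have := witness_nonneg hC hcC hc0 hm hM0; linarith⟩
  have hBbdd : BddBelow B := ⟨m0, fun M hM => by
    have := witness_nonneg hC hcC hc0 hm0 hM; linarith⟩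
  have hmemA : sSup A ∈ A := hAcl.csSup_mem hAne hAbdd
  have hmemB : sInf B ∈ B := hBcl.csInf_mem hBne hBbdd
  refine ⟨sSup A, sInf B, hmemA, hmemB, ?_⟩
  refine le_csInf ⟨M0 - m0, m0, M0, hm0, hM0, rfl⟩ ?_
  rintro d ⟨m, M, hm, hM, rfl⟩
  have h1 : sInf B ≤ M := csInf_le hBbdd hM
  have h2 : m ≤ sSup A := le_csSup hAbdd hm
  linarith

lemma oscP_eq_zero (hC : IsProperCone C) (hcC : c ∈ C) (hc0 : c ≠ 0) {v : V}
    (hb : Bdd C c v) (h : oscP C c v ≤ 0) : ∃ s : ℝ, v = s • c := by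
  obtain ⟨m, M, hm, hM, hle⟩ := oscP_attain hC hcC hc0 hb
  have h0 := witness_nonneg hC hcC hc0 hm hM
  have hMm : M = m := by linarith
  refine ⟨m, ?_⟩
  have h2 : -(v - m • c) ∈ C := by
    rw [hMm] at hM
    rwa [show -(v - m • c) = m • c - v from by module]
  exact sub_eq_zero.mp (cone_eq_zero hC hm h2)

lemma Bdd_add {v w : V} (hC : IsProperCone C) (hv : Bdd C c v) (hw : Bdd C c w) :
    Bdd C c (v + w) := by
  obtain ⟨m1, M1, h1, h2⟩ := hv
  obtain ⟨m2, M2, h3, h4⟩ := hw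
  refine ⟨m1 + m2, M1 + M2, ?_, ?_⟩
  · rw [show v + w - (m1 + m2) • c = (v - m1 • c) + (w - m2 • c) from by module]
    exact cone_add hC h1 h3
  · rw [show (M1 + M2) • c - (v + w) = (M1 • c - v) + (M2 • c - w) from by module]
    exact cone_add hC h2 h4

lemma Bdd_smul {v : V} (hC : IsProperCone C) (hv : Bdd C c v) (r : ℝ) :
    Bdd C c (r • v) := by
  obtain ⟨m, M, h1, h2⟩ := hv
  rcases le_or_gt 0 r with hr | hr
  · refine ⟨r * m, r * M, ?_, ?_⟩
    · rw [show r • v - (r * m) • c = r • (v - m • c) from by module]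
      exact cone_smul hC hr h1
    · rw [show (r * M) • c - r • v = r • (M • c - v) from by module]
      exact cone_smul hC hr h2
  · refine ⟨r * M, r * m, ?_, ?_⟩
    · rw [show r • v - (r * M) • c = (-r) • (M • c - v) from by module]
      exact cone_smul hC (by linarith) h2
    · rw [show (r * m) • c - r • v = (-r) • (v - m • c) from by module]
      exact cone_smul hC (by linarith) h1

lemma oscP_smul_le (hC : IsProperCone C) (hcC : c ∈ C) (hc0 : c ≠ 0) {v : V} {r : ℝ}
    (hr : 0 ≤ r) (hb : Bdd C c v) : oscP C c (r • v) ≤ r * oscP C c v := by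
  obtain ⟨m, M, hm, hM, hle⟩ := oscP_attain hC hcC hc0 hb
  have h1 : r • v - (r * m) • c ∈ C := by
    rw [show r • v - (r * m) • c = r • (v - m • c) from by module]
    exact cone_smul hC hr hm
  have h2 : (r * M) • c - r • v ∈ C := by
    rw [show (r * M) • c - r • v = r • (M • c - v) from by module]
    exact cone_smul hC hr hM
  calc oscP C c (r • v) ≤ r * M - r * m := oscP_le hC hcC hc0 h1 h2
  _ = r * (M - m) := by ring
  _ ≤ r * oscP C c v := mul_le_mul_of_nonneg_left hle hr

lemma oscP_neg_le (hC : IsProperCone C) (hcC : c ∈ C) (hc0 : c ≠ 0) {v : V}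
    (hb : Bdd C c v) : oscP C c (-v) ≤ oscP C c v := by
  obtain ⟨m, M, hm, hM, hle⟩ := oscP_attain hC hcC hc0 hb
  have h1 : -v - (-M) • c ∈ C := by
    rw [show -v - (-M) • c = M • c - v from by module]; exact hM
  have h2 : (-m) • c - (-v) ∈ C := by
    rw [show (-m) • c - (-v) = v - m • c from by module]; exact hm
  calc oscP C c (-v) ≤ -m - -M := oscP_le hC hcC hc0 h1 h2
  _ = M - m := by ring
  _ ≤ _ := hle

lemma oscP_abs_smul_le (hC : IsProperCone C) (hcC : c ∈ C) (hc0 : c ≠ 0) {v : V} (r : ℝ)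
    (hb : Bdd C c v) : oscP C c (r • v) ≤ |r| * oscP C c v := by
  rcases le_or_gt 0 r with hr | hr
  · rw [abs_of_nonneg hr]; exact oscP_smul_le hC hcC hc0 hr hb
  · rw [abs_of_neg hr]
    have h1 : r • v = -((-r) • v) := by module
    rw [h1]
    calc oscP C c (-((-r) • v)) ≤ oscP C c ((-r) • v) :=
        oscP_neg_le hC hcC hc0 (Bdd_smul hC hb (-r))
    _ ≤ -r * oscP C c v := oscP_smul_le hC hcC hc0 (by linarith) hb

lemma oscP_smul_eq (hC : IsProperCone C) (hcC : c ∈ C) (hc0 : c ≠ 0) {v : V} {r : ℝ}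
    (hr : 0 < r) (hb : Bdd C c v) : oscP C c (r • v) = r * oscP C c v := by
  apply le_antisymm (oscP_smul_le hC hcC hc0 hr.le hb)
  have h := oscP_smul_le hC hcC hc0 (inv_nonneg.mpr hr.le) (Bdd_smul hC hb r)
  rw [smul_smul, inv_mul_cancel₀ hr.ne', one_smul] at h
  calc r * oscP C c v ≤ r * (r⁻¹ * oscP C c (r • v)) := by
        exact mul_le_mul_of_nonneg_left h hr.le
  _ = oscP C c (r • v) := by field_simp

lemma oscP_add_le (hC : IsProperCone C) (hcC : c ∈ C) (hc0 : c ≠ 0) {v w : V}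
    (hv : Bdd C c v) (hw : Bdd C c w) :
    oscP C c (v + w) ≤ oscP C c v + oscP C c w := by
  obtain ⟨m1, M1, h1, h2, h5⟩ := oscP_attain hC hcC hc0 hv
  obtain ⟨m2, M2, h3, h4, h6⟩ := oscP_attain hC hcC hc0 hw
  have ha : v + w - (m1 + m2) • c ∈ C := by
    rw [show v + w - (m1 + m2) • c = (v - m1 • c) + (w - m2 • c) from by module]
    exact cone_add hC h1 h3
  have hb' : (M1 + M2) • c - (v + w) ∈ C := by
    rw [show (M1 + M2) • c - (v + w) = (M1 • c - v) + (M2 • c - w) from by module]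
    exact cone_add hC h2 h4
  calc oscP C c (v + w) ≤ (M1 + M2) - (m1 + m2) := oscP_le hC hcC hc0 ha hb'
  _ ≤ oscP C c v + oscP C c w := by linarith


lemma hilbertDist_self (hC : IsProperCone C) (hcC : c ∈ C) (hc0 : c ≠ 0) :
    hilbertDist C c c = (0 : EReal) := by
  rw [hilbertDist, if_neg, supRatio_self hC hcC hc0]
  · norm_num
  · rw [supRatio_self hC hcC hc0]
    simp only [or_self]
    exact EReal.coe_ne_top 1

lemma le_projDiam {C' : Set V} (T : V →ₗ[ℝ] V) {a b : V} (ha : a ∈ C \ {0})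
    (hb : b ∈ C \ {0}) : hilbertDist C' (T a) (T b) ≤ projDiam C C' T :=
  le_iSup_of_le a (le_iSup_of_le ha (le_iSup_of_le b (le_iSup_of_le hb le_rfl)))

lemma projDiam_nonneg (hC : IsProperCone C) (hcC : c ∈ C) (hc0 : c ≠ 0)
    {T : V →ₗ[ℝ] V} (hfix : T c = c) : (0 : EReal) ≤ projDiam C C T := by
  have hc' : c ∈ C \ {0} := ⟨hcC, by simp [hc0]⟩
  have h := le_projDiam (C' := C) T hc' hc'
  rwa [hfix, hilbertDist_self hC hcC hc0] at h

lemma diam_toReal_nonneg (hC : IsProperCone C) (hcC : c ∈ C) (hc0 : c ≠ 0)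
    {T : V →ₗ[ℝ] V} (hfix : T c = c) (htop : projDiam C C T ≠ ⊤) :
    0 ≤ (projDiam C C T).toReal := by
  have h := projDiam_nonneg hC hcC hc0 hfix
  have := ereal_le_toReal (x := 0) (by exact_mod_cast h) htop
  simpa using this

lemma tanhQuarter_nonneg (hC : IsProperCone C) (hcC : c ∈ C) (hc0 : c ≠ 0)
    {T : V →ₗ[ℝ] V} (hfix : T c = c) : 0 ≤ tanhQuarter (projDiam C C T) := by
  rw [tanhQuarter]
  split_ifs with h
  · norm_num
  · have := diam_toReal_nonneg hC hcC hc0 hfix h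
    exact tanh_nonneg' (by linarith)

lemma contract (hC : IsProperCone C) {T : V →ₗ[ℝ] V} (hT : ∀ x ∈ C, T x ∈ C)
    (hcC : c ∈ C) (hc0 : c ≠ 0) (hfix : T c = c) (hΔ : projDiam C C T < ⊤)
    {v : V} {m M : ℝ} (hm : v - m • c ∈ C) (hM : M • c - v ∈ C) :
    ∃ m' M' : ℝ, T v - m' • c ∈ C ∧ M' • c - T v ∈ C ∧
      M' - m' ≤ tanhQuarter (projDiam C C T) * (M - m) := by
  have hΔtop : projDiam C C T ≠ ⊤ := hΔ.ne
  have hk0 : 0 ≤ tanhQuarter (projDiam C C T) := tanhQuarter_nonneg hC hcC hc0 hfix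
  have hMm : 0 ≤ M - m := witness_nonneg hC hcC hc0 hm hM
  set y' := T (v - m • c) with hy'def
  set z' := T (M • c - v) with hz'def
  have hy'C : y' ∈ C := hT _ hm
  have hz'C : z' ∈ C := hT _ hM
  have hTv : T v = y' + m • c := by
    rw [hy'def, map_sub, map_smul, hfix]; abel
  have hsum : y' + z' = (M - m) • c := by
    rw [hy'def, hz'def, ← map_add,
      show v - m • c + (M • c - v) = (M - m) • c from by module, map_smul, hfix]
  by_cases hy0 : y' = 0
  · refine ⟨m, m, ?_, ?_, ?_⟩
    · rw [hTv, hy0, zero_add, sub_self]; exact cone_zero hC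
    · rw [hTv, hy0, zero_add, sub_self]; exact cone_zero hC
    · simpa using mul_nonneg hk0 hMm
  by_cases hz0 : z' = 0
  · have hTvM : T v = M • c := by
      have h1 : y' = (M - m) • c := by rw [← hsum, hz0, add_zero]
      rw [hTv, h1]; module
    refine ⟨M, M, ?_, ?_, ?_⟩
    · rw [hTvM, sub_self]; exact cone_zero hC
    · rw [hTvM, sub_self]; exact cone_zero hC
    · simpa using mul_nonneg hk0 hMm
  have hvm0 : v - m • c ≠ 0 := fun h => hy0 (by rw [hy'def, h, map_zero])
  have hMv0 : M • c - v ≠ 0 := fun h => hz0 (by rw [hz'def, h, map_zero])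
  have hdist : hilbertDist C y' z' ≤ projDiam C C T := by
    rw [hy'def, hz'def]
    exact le_projDiam T ⟨hm, by simp [hvm0]⟩ ⟨hM, by simp [hMv0]⟩
  have h1 : supRatio C y' z' ≠ ⊤ ∧ supRatio C z' y' ≠ ⊤ := by
    by_contra h
    have h' : supRatio C y' z' = ⊤ ∨ supRatio C z' y' = ⊤ := by tauto
    have : hilbertDist C y' z' = ⊤ := by rw [hilbertDist, if_pos h']
    rw [this] at hdist
    exact hΔtop (top_le_iff.mp hdist)
  obtain ⟨β, hβ0, hβmem, hβeq⟩ := supRatio_attain hC hy'C hz'C hy0 hz0 h1.1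
  obtain ⟨γ, hγ0, hγmem, hγeq⟩ := supRatio_attain hC hz'C hy'C hz0 hy0 h1.2
  have hlog : Real.log (β * γ) ≤ (projDiam C C T).toReal := by
    have heq : hilbertDist C y' z' = ((Real.log (β * γ) : ℝ) : EReal) := by
      rw [hilbertDist, if_neg (not_or.mpr h1), hβeq, hγeq]
      simp
    exact ereal_le_toReal (heq ▸ hdist) hΔtop
  have hβγ : 1 ≤ β * γ := by
    by_contra h
    push_neg at h
    have hmem1 : (β * γ - 1) • y' ∈ C := by
      have h2 := cone_add hC hβmem (cone_smul hC hβ0.le hγmem)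
      rwa [show β • z' - y' + β • (γ • y' - z') = (β * γ - 1) • y' from by module] at h2
    have hmem2 : (1 - β * γ) • y' ∈ C := cone_smul hC (by linarith) hy'C
    have h3 : (β * γ - 1) • y' = 0 := by
      apply cone_eq_zero hC hmem1
      rwa [show -((β * γ - 1) • y') = (1 - β * γ) • y' from by module]
    rcases smul_eq_zero.mp h3 with h' | h'
    · linarith
    · exact hy0 h'
  set α := γ⁻¹ with hαdef
  have hα0 : 0 < α := inv_pos.mpr hγ0
  have hαβ : α ≤ β := by
    rw [hαdef, inv_eq_one_div, div_le_iff₀ hγ0]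
    linarith
  have hαmem : y' - α • z' ∈ C := by
    have h2 := cone_smul hC hα0.le hγmem
    rwa [smul_sub, smul_smul, hαdef, inv_mul_cancel₀ hγ0.ne', one_smul] at h2
  set D := (projDiam C C T).toReal with hDdef
  have hD0 : 0 ≤ D := diam_toReal_nonneg hC hcC hc0 hfix hΔtop
  set s := Real.exp (D / 2) with hsdef
  have hs1 : 1 ≤ s := Real.one_le_exp (by positivity)
  have hβs : β ≤ s ^ 2 * α := by
    have hbg : 0 < β * γ := by positivity
    have h2 : β * γ ≤ Real.exp D := by
      calc β * γ = Real.exp (Real.log (β * γ)) := (Real.exp_log hbg).symm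
      _ ≤ Real.exp D := Real.exp_le_exp.mpr hlog
    have hs2 : s ^ 2 = Real.exp D := by
      rw [hsdef, sq, ← Real.exp_add]; ring_nf
    calc β = (β * γ) * α := by rw [hαdef]; field_simp
    _ ≤ Real.exp D * α := mul_le_mul_of_nonneg_right h2 hα0.le
    _ = s ^ 2 * α := by rw [hs2]
  have hkey : β / (1 + β) - α / (1 + α) ≤ (s - 1) / (s + 1) :=
    key_ineq hα0 hαβ hs1 hβs
  have htanh : tanhQuarter (projDiam C C T) = (s - 1) / (s + 1) := by
    rw [tanhQuarter, if_neg hΔtop, ← hDdef, tanh_quarter_eq, ← hsdef]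
  have h1α : (0:ℝ) < 1 + α := by linarith
  have h1β : (0:ℝ) < 1 + β := by linarith
  refine ⟨m + (M - m) * (α / (1 + α)), m + (M - m) * (β / (1 + β)), ?_, ?_, ?_⟩
  · have hrw : T v - (m + (M - m) * (α / (1 + α))) • c = (1 + α)⁻¹ • (y' - α • z') := by
      rw [hTv]
      calc y' + m • c - (m + (M - m) * (α / (1 + α))) • c
          = y' - (α / (1 + α)) • ((M - m) • c) := by module
      _ = y' - (α / (1 + α)) • (y' + z') := by rw [← hsum]
      _ = (1 + α)⁻¹ • (y' - α • z') := by
          match_scalars <;> field_simp <;> ring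
    rw [hrw]
    exact cone_smul hC (by positivity) hαmem
  · have hrw : (m + (M - m) * (β / (1 + β))) • c - T v = (1 + β)⁻¹ • (β • z' - y') := by
      rw [hTv]
      calc (m + (M - m) * (β / (1 + β))) • c - (y' + m • c)
          = (β / (1 + β)) • ((M - m) • c) - y' := by module
      _ = (β / (1 + β)) • (y' + z') - y' := by rw [← hsum]
      _ = (1 + β)⁻¹ • (β • z' - y') := by
          match_scalars <;> field_simp <;> ring
    rw [hrw]
    exact cone_smul hC (by positivity) hβmem
  · rw [htanh]
    have hexp : m + (M - m) * (β / (1 + β)) - (m + (M - m) * (α / (1 + α)))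
        = (M - m) * (β / (1 + β) - α / (1 + α)) := by ring
    rw [hexp]
    calc (M - m) * (β / (1 + β) - α / (1 + α)) ≤ (M - m) * ((s - 1) / (s + 1)) :=
        mul_le_mul_of_nonneg_left hkey hMm
    _ = (s - 1) / (s + 1) * (M - m) := by ring

lemma oscP_contract (hC : IsProperCone C) {T : V →ₗ[ℝ] V} (hT : ∀ x ∈ C, T x ∈ C)
    (hcC : c ∈ C) (hc0 : c ≠ 0) (hfix : T c = c) (hΔ : projDiam C C T < ⊤)
    {v : V} (hb : ∃ m M : ℝ, v - m • c ∈ C ∧ M • c - v ∈ C) :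
    oscP C c (T v) ≤ tanhQuarter (projDiam C C T) * oscP C c v := by
  obtain ⟨m, M, hm, hM, hle⟩ := oscP_attain hC hcC hc0 hb
  obtain ⟨m', M', hm', hM', hle'⟩ := contract hC hT hcC hc0 hfix hΔ hm hM
  have hk0 : 0 ≤ tanhQuarter (projDiam C C T) := tanhQuarter_nonneg hC hcC hc0 hfix
  calc oscP C c (T v) ≤ M' - m' := oscP_le hC hcC hc0 hm' hM'
  _ ≤ tanhQuarter (projDiam C C T) * (M - m) := hle'
  _ ≤ tanhQuarter (projDiam C C T) * oscP C c v := mul_le_mul_of_nonneg_left hle hk0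


section Complexification
open TensorProduct

/-- Real part of an element of the complexification. -/
def reM (V : Type*) [NormedAddCommGroup V] [InnerProductSpace ℝ V] :
    ℂ ⊗[ℝ] V →ₗ[ℝ] V :=
  TensorProduct.lift ((LinearMap.lsmul ℝ V).comp Complex.reLm)

/-- Imaginary part of an element of the complexification. -/
def imM (V : Type*) [NormedAddCommGroup V] [InnerProductSpace ℝ V] :
    ℂ ⊗[ℝ] V →ₗ[ℝ] V :=
  TensorProduct.lift ((LinearMap.lsmul ℝ V).comp Complex.imLm)

@[simp] lemma reM_tmul (z : ℂ) (v : V) : reM V (z ⊗ₜ[ℝ] v) = z.re • v := by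
  simp [reM]

@[simp] lemma imM_tmul (z : ℂ) (v : V) : imM V (z ⊗ₜ[ℝ] v) = z.im • v := by
  simp [imM]

lemma reM_baseChange (T : V →ₗ[ℝ] V) (a : ℂ ⊗[ℝ] V) :
    reM V (LinearMap.baseChange ℂ T a) = T (reM V a) := by
  induction a using TensorProduct.induction_on with
  | zero => simp
  | tmul z v => simp [map_smul]
  | add u w hu hw => simp [map_add, hu, hw]

lemma imM_baseChange (T : V →ₗ[ℝ] V) (a : ℂ ⊗[ℝ] V) :
    imM V (LinearMap.baseChange ℂ T a) = T (imM V a) := by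
  induction a using TensorProduct.induction_on with
  | zero => simp
  | tmul z v => simp [map_smul]
  | add u w hu hw => simp [map_add, hu, hw]

lemma reM_smul (lam : ℂ) (a : ℂ ⊗[ℝ] V) :
    reM V (lam • a) = lam.re • reM V a - lam.im • imM V a := by
  induction a using TensorProduct.induction_on with
  | zero => simp
  | tmul z v =>
      rw [TensorProduct.smul_tmul']
      simp only [smul_eq_mul, reM_tmul, imM_tmul, Complex.mul_re]
      module
  | add u w hu hw =>
      simp only [smul_add, map_add, hu, hw]
      module

lemma imM_smul (lam : ℂ) (a : ℂ ⊗[ℝ] V) :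
    imM V (lam • a) = lam.im • reM V a + lam.re • imM V a := by
  induction a using TensorProduct.induction_on with
  | zero => simp
  | tmul z v =>
      rw [TensorProduct.smul_tmul']
      simp only [smul_eq_mul, reM_tmul, imM_tmul, Complex.mul_im]
      module
  | add u w hu hw =>
      simp only [smul_add, map_add, hu, hw]
      module

lemma repr_eq (a : ℂ ⊗[ℝ] V) :
    a = (1 : ℂ) ⊗ₜ[ℝ] (reM V a) + Complex.I ⊗ₜ[ℝ] (imM V a) := by
  induction a using TensorProduct.induction_on with
  | zero => simp
  | tmul z v =>
      rw [reM_tmul, imM_tmul, TensorProduct.tmul_smul, TensorProduct.tmul_smul,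
        TensorProduct.smul_tmul', TensorProduct.smul_tmul', ← TensorProduct.add_tmul]
      congr 1
      apply Complex.ext <;> simp
  | add u w hu hw =>
      calc u + w = ((1 : ℂ) ⊗ₜ[ℝ] (reM V u) + Complex.I ⊗ₜ[ℝ] (imM V u))
            + ((1 : ℂ) ⊗ₜ[ℝ] (reM V w) + Complex.I ⊗ₜ[ℝ] (imM V w)) := by
            rw [← hu, ← hw]
      _ = (1 : ℂ) ⊗ₜ[ℝ] (reM V (u + w)) + Complex.I ⊗ₜ[ℝ] (imM V (u + w)) := by
            rw [map_add, map_add, TensorProduct.tmul_add, TensorProduct.tmul_add]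
            abel

lemma smul_one_tmul (z : ℂ) (v : V) :
    z • ((1 : ℂ) ⊗ₜ[ℝ] v) = z ⊗ₜ[ℝ] v := by
  rw [TensorProduct.smul_tmul']
  simp


end Complexification

lemma one_smul_tmul_c (sx sy : ℝ) (c : V) :
    (1 : ℂ) ⊗ₜ[ℝ] (sx • c) + Complex.I ⊗ₜ[ℝ] (sy • c)
      = ((sx : ℂ) + (sy : ℂ) * Complex.I) • ((1 : ℂ) ⊗ₜ[ℝ] c) := by
  rw [TensorProduct.tmul_smul, TensorProduct.tmul_smul, TensorProduct.smul_tmul',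
    TensorProduct.smul_tmul', TensorProduct.smul_tmul', ← TensorProduct.add_tmul]
  congr 1
  apply Complex.ext <;> simp

lemma Bdd_sub {v w : V} (hC : IsProperCone C) (hv : Bdd C c v) (hw : Bdd C c w) :
    Bdd C c (v - w) := by
  obtain ⟨m1, M1, h1, h2⟩ := hv
  obtain ⟨m2, M2, h3, h4⟩ := hw
  refine ⟨m1 - M2, M1 - m2, ?_, ?_⟩
  · rw [show v - w - (m1 - M2) • c = (v - m1 • c) + (M2 • c - w) from by module]
    exact cone_add hC h1 h4
  · rw [show (M1 - m2) • c - (v - w) = (M1 • c - v) + (w - m2 • c) from by module]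
    exact cone_add hC h2 h3

lemma Bdd_T_cone (hC : IsProperCone C) {T : V →ₗ[ℝ] V} (hT : ∀ x ∈ C, T x ∈ C)
    (hcC : c ∈ C) (hc0 : c ≠ 0) (hfix : T c = c) (hΔ : projDiam C C T < ⊤)
    {p : V} (hp : p ∈ C) : Bdd C c (T p) := by
  by_cases hTp : T p = 0
  · exact ⟨0, 0, by simp [hTp, cone_zero hC], by simp [hTp, cone_zero hC]⟩
  have hp0 : p ≠ 0 := fun h => hTp (by rw [h, map_zero])
  have hc' : c ∈ C \ {0} := ⟨hcC, by simp [hc0]⟩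
  have hdist : hilbertDist C (T p) (T c) ≤ projDiam C C T :=
    le_iSup_of_le p (le_iSup_of_le ⟨hp, by simp [hp0]⟩
      (le_iSup_of_le c (le_iSup_of_le hc' le_rfl)))
  rw [hfix] at hdist
  have htop : supRatio C (T p) c ≠ ⊤ := by
    intro h
    have : hilbertDist C (T p) c = ⊤ := by rw [hilbertDist, if_pos (Or.inl h)]
    rw [this] at hdist
    exact hΔ.ne (top_le_iff.mp hdist)
  obtain ⟨β, hβ0, hβmem, _⟩ := supRatio_attain hC (hT p hp) hcC hTp hc0 htop
  exact ⟨0, β, by simpa using hT p hp, hβmem⟩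

lemma Bdd_T (hC : IsProperCone C) {T : V →ₗ[ℝ] V} (hT : ∀ x ∈ C, T x ∈ C)
    (hcC : c ∈ C) (hc0 : c ≠ 0) (hfix : T c = c) (hΔ : projDiam C C T < ⊤)
    (w : V) : Bdd C c (T w) := by
  obtain ⟨p, hp, q, hq, rfl⟩ := exists_decomp hC w
  rw [map_sub]
  exact Bdd_sub hC (Bdd_T_cone hC hT hcC hc0 hfix hΔ hp)
    (Bdd_T_cone hC hT hcC hc0 hfix hΔ hq)


end SBPD

end Auxiliary

open SBPD

set_option maxHeartbeats 1000000 in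
open TensorProduct in
/-- **Spectral bound on the projective diameter.** -/
theorem spectral_bound_on_projective_diameter
    {V : Type*} [NormedAddCommGroup V] [InnerProductSpace ℝ V] [FiniteDimensional ℝ V]
    (C : Set V) (hC : IsProperCone C)
    (T : V →ₗ[ℝ] V) (hT : ∀ x ∈ C, T x ∈ C)
    (c : V) (hcC : c ∈ C) (hc0 : c ≠ 0) (hfix : T c = c)
    (hΔ : projDiam C C T < ⊤)
    (lam : ℂ) (a : ℂ ⊗[ℝ] V) (ha0 : a ≠ 0)
    (heig : LinearMap.baseChange ℂ T a = lam • a)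
    (hnc : ∀ z : ℂ, a ≠ z • ((1 : ℂ) ⊗ₜ[ℝ] c)) :
    ‖lam‖ ≤ tanhQuarter (projDiam C C T) := by
  have hk0 : 0 ≤ tanhQuarter (projDiam C C T) := tanhQuarter_nonneg hC hcC hc0 hfix
  rcases eq_or_ne lam 0 with rfl | hlam0
  · simpa using hk0
  set k := tanhQuarter (projDiam C C T) with hkdef
  set ρ := ‖lam‖ with hρdef
  have hρ0 : 0 < ρ := by
    rw [hρdef]
    exact norm_pos_iff.mpr hlam0
  set x := reM V a with hxdef
  set y := imM V a with hydef
  have hE1 : T x = lam.re • x - lam.im • y := by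
    have h1 := congrArg (reM V) heig
    rwa [reM_baseChange, reM_smul, ← hxdef, ← hydef] at h1
  have hE2 : T y = lam.im • x + lam.re • y := by
    have h1 := congrArg (imM V) heig
    rwa [imM_baseChange, imM_smul, ← hxdef, ← hydef] at h1
  have hρ2 : ρ ^ 2 = lam.re ^ 2 + lam.im ^ 2 := by
    rw [hρdef, Complex.sq_norm, Complex.normSq_apply]; ring
  have hBx : Bdd C c x := by
    have hxpre : x = T ((lam.re / ρ ^ 2) • x + (lam.im / ρ ^ 2) • y) := by
      rw [map_add, map_smul, map_smul, hE1, hE2]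
      match_scalars <;> field_simp <;>
        first
          | linear_combination hρ2
          | linear_combination -hρ2
          | ring
    rw [hxpre]
    exact Bdd_T hC hT hcC hc0 hfix hΔ _
  have hBy : Bdd C c y := by
    have hypre : y = T ((-lam.im / ρ ^ 2) • x + (lam.re / ρ ^ 2) • y) := by
      rw [map_add, map_smul, map_smul, hE1, hE2]
      match_scalars <;> field_simp <;>
        first
          | linear_combination hρ2
          | linear_combination -hρ2
          | ring
    rw [hypre]
    exact Bdd_T hC hT hcC hc0 hfix hΔ _
  set φ := lam.arg with hφdef
  have hre : lam.re = ρ * Real.cos φ := by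
    rw [hφdef, Complex.cos_arg hlam0, hρdef]
    field_simp
  have him : lam.im = ρ * Real.sin φ := by
    rw [hφdef, Complex.sin_arg, hρdef]
    field_simp
  set u : ℝ → V := fun θ => Real.cos θ • x + Real.sin θ • y with hudef
  have hBu : ∀ θ, Bdd C c (u θ) := by
    intro θ
    simp only [hudef]
    exact Bdd_add hC (Bdd_smul hC hBx _) (Bdd_smul hC hBy _)
  have hTu : ∀ θ, T (u θ) = ρ • u (θ - φ) := by
    intro θ
    simp only [hudef]
    rw [map_add, map_smul, map_smul, hE1, hE2, hre, him, Real.cos_sub, Real.sin_sub]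
    module
  set Sset := Set.range (fun θ : ℝ => oscP C c (u θ)) with hSsetdef
  have hbound : ∀ θ, oscP C c (u θ) ≤ oscP C c x + oscP C c y := by
    intro θ
    have h1 : oscP C c (u θ) ≤ oscP C c (Real.cos θ • x) + oscP C c (Real.sin θ • y) := by
      simp only [hudef]
      exact oscP_add_le hC hcC hc0 (Bdd_smul hC hBx _) (Bdd_smul hC hBy _)
    have h2 := oscP_abs_smul_le hC hcC hc0 (Real.cos θ) hBx
    have h3 := oscP_abs_smul_le hC hcC hc0 (Real.sin θ) hBy
    have h4 : |Real.cos θ| * oscP C c x ≤ oscP C c x := by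
      nlinarith [Real.abs_cos_le_one θ, oscP_nonneg hC hcC hc0 x, abs_nonneg (Real.cos θ)]
    have h5 : |Real.sin θ| * oscP C c y ≤ oscP C c y := by
      nlinarith [Real.abs_sin_le_one θ, oscP_nonneg hC hcC hc0 y, abs_nonneg (Real.sin θ)]
    linarith
  have hSbdd : BddAbove Sset := by
    refine ⟨oscP C c x + oscP C c y, ?_⟩
    rintro _ ⟨θ, rfl⟩
    exact hbound θ
  have hSne : Sset.Nonempty := ⟨_, ⟨0, rfl⟩⟩
  set S := sSup Sset with hSdef
  have hmemle : ∀ θ, oscP C c (u θ) ≤ S := fun θ => le_csSup hSbdd ⟨θ, rfl⟩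
  have hkS : ∀ ψ : ℝ, ρ * oscP C c (u ψ) ≤ k * S := by
    intro ψ
    have h1 : T (u (ψ + φ)) = ρ • u ψ := by rw [hTu, add_sub_cancel_right]
    calc ρ * oscP C c (u ψ) = oscP C c (ρ • u ψ) :=
          (oscP_smul_eq hC hcC hc0 hρ0 (hBu ψ)).symm
    _ = oscP C c (T (u (ψ + φ))) := by rw [h1]
    _ ≤ k * oscP C c (u (ψ + φ)) := oscP_contract hC hT hcC hc0 hfix hΔ (hBu _)
    _ ≤ k * S := mul_le_mul_of_nonneg_left (hmemle _) hk0
  have hρS : ρ * S ≤ k * S := by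
    have h2 : ∀ θ, oscP C c (u θ) ≤ (k * S) / ρ := by
      intro θ
      rw [le_div_iff₀ hρ0, mul_comm]
      exact hkS θ
    have h3 : S ≤ (k * S) / ρ := by
      apply csSup_le hSne
      rintro _ ⟨θ, rfl⟩
      exact h2 θ
    rw [le_div_iff₀ hρ0] at h3
    calc ρ * S = S * ρ := mul_comm _ _
    _ ≤ k * S := h3
  have hSnonneg : 0 ≤ S := le_trans (oscP_nonneg hC hcC hc0 (u 0)) (hmemle 0)
  have hSpos : 0 < S := by
    rcases hSnonneg.lt_or_eq with h | h
    · exact h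
    exfalso
    have hu0 : u 0 = x := by simp [hudef]
    have hu1 : u (Real.pi / 2) = y := by simp [hudef]
    have hx0 : oscP C c x ≤ 0 := by
      have := hmemle 0
      rw [hu0] at this
      linarith [h.symm ▸ this]
    have hy0 : oscP C c y ≤ 0 := by
      have := hmemle (Real.pi / 2)
      rw [hu1] at this
      linarith [h.symm ▸ this]
    obtain ⟨sx, hsx⟩ := oscP_eq_zero hC hcC hc0 hBx hx0
    obtain ⟨sy, hsy⟩ := oscP_eq_zero hC hcC hc0 hBy hy0
    apply hnc ((sx : ℂ) + (sy : ℂ) * Complex.I)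
    conv_lhs => rw [repr_eq a]
    rw [← hxdef, ← hydef, hsx, hsy]
    exact one_smul_tmul_c sx sy c
  nlinarith [hρS, hSpos]


end
end

section
/- (Base norm vs. Hilbert's projective metric.) Let C ⊆ V be a proper cone with base B = C ∩ {v | ⟨e,v⟩ = 1} for some e in the interior of C*. Then for all b₁, b₂ ∈ B: (1/2)‖b₁−b₂‖_B = N_B(b₁−b₂) ≤ tanh(h_C(b₁,b₂)/4). More generally, for any c₁, c₂ ∈ C with ⟨e,c₂⟩ ≤ ⟨e,c₁⟩: N_B(c₁−c₂) ≤ ⟨e,c₂⟩ · tanh(h_C(c₁,c₂)/4), where tanh(∞/4) := 1. -/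
noncomputable section

variable {V : Type*} [NormedAddCommGroup V] [InnerProductSpace ℝ V]

variable {V' : Type*} [NormedAddCommGroup V'] [InnerProductSpace ℝ V']

section AuxLemmas

variable {V : Type*} [NormedAddCommGroup V] [InnerProductSpace ℝ V]

lemma cone_zero_mem {C : Set V} (hC : IsProperCone C) : (0:V) ∈ C := by
  have h := hC.2.2.2.1
  have : (0:V) ∈ C ∩ (-C) := by rw [h]; rfl
  exact this.1

lemma cone_add {C : Set V} (hC : IsProperCone C) {x y : V} (hx : x ∈ C) (hy : y ∈ C) :
    x + y ∈ C := by
  have h := hC.2.1 hx hy (by norm_num : (0:ℝ) ≤ 1/2) (by norm_num : (0:ℝ) ≤ 1/2) (by norm_num)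
  have h2 := hC.2.2.1 2 (by norm_num) _ h
  have : (2:ℝ) • ((1/2:ℝ) • x + (1/2:ℝ) • y) = x + y := by
    rw [smul_add, smul_smul, smul_smul]; norm_num
  rwa [this] at h2

lemma cone_pointed {C : Set V} (hC : IsProperCone C) {x : V} (hx : x ∈ C) (hnx : -x ∈ C) :
    x = 0 := by
  have : x ∈ C ∩ (-C) := ⟨hx, by simpa [Set.mem_neg] using hnx⟩
  rw [hC.2.2.2.1] at this
  exact this

lemma inner_pos_of_interior {C : Set V} {e : V} (he : e ∈ interior (dualConeSet C))
    {c : V} (hc : c ∈ C) (hc0 : c ≠ 0) : 0 < (inner ℝ e c : ℝ) := by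
  rw [mem_interior_iff_mem_nhds, Metric.mem_nhds_iff] at he
  obtain ⟨ε, hε, hball⟩ := he
  have hcn : (0:ℝ) < ‖c‖ := norm_pos_iff.2 hc0
  set δ : ℝ := ε / (2 * ‖c‖) with hδdef
  have hδ : 0 < δ := by positivity
  have hmem : e - δ • c ∈ Metric.ball e ε := by
    rw [Metric.mem_ball, dist_eq_norm]
    have : e - δ • c - e = -(δ • c) := by abel
    rw [this, norm_neg, norm_smul, Real.norm_eq_abs, abs_of_pos hδ]
    rw [hδdef]
    rw [div_mul_eq_mul_div]
    rw [div_lt_iff₀ (by positivity)]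
    nlinarith
  have h := hball hmem c hc
  rw [inner_sub_left, real_inner_smul_left, real_inner_self_eq_norm_sq] at h
  nlinarith [sq_nonneg ‖c‖, mul_pos hδ (mul_pos hcn hcn)]

lemma negativity_bddBelow (C : Set V) {e : V} (he : e ∈ interior (dualConeSet C)) (v : V) :
    BddBelow {r : ℝ | ∃ cp ∈ C, ∃ cm ∈ C, v = cp - cm ∧ r = (inner ℝ e cm : ℝ)} := by
  refine ⟨0, ?_⟩
  rintro r ⟨cp, hcp, cm, hcm, hv, rfl⟩
  exact (interior_subset he) cm hcm

lemma negativity_le {C : Set V} {e : V} (he : e ∈ interior (dualConeSet C))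
    {v cp cm : V} (hcp : cp ∈ C) (hcm : cm ∈ C) (hv : v = cp - cm) :
    negativity C e v ≤ (inner ℝ e cm : ℝ) :=
  csInf_le (negativity_bddBelow C he v) ⟨cp, hcp, cm, hcm, hv, rfl⟩

lemma supRatio_spec {C : Set V} (hC : IsProperCone C) {e : V}
    (he : e ∈ interior (dualConeSet C)) {a b : V} (hb : b ∈ C) (hb0 : b ≠ 0)
    (htop : supRatio C a b ≠ ⊤) :
    ∃ β : ℝ, supRatio C a b = (β : EReal) ∧ β • b - a ∈ C ∧
      (inner ℝ e a : ℝ) ≤ β * (inner ℝ e b : ℝ) := by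
  set S := {l : ℝ | l • b - a ∈ C} with hSdef
  have hbe : 0 < (inner ℝ e b : ℝ) := inner_pos_of_interior he hb hb0
  have hsup : supRatio C a b = sInf ((fun l : ℝ => (l : EReal)) '' S) := rfl
  have hSne : S.Nonempty := by
    rcases Set.eq_empty_or_nonempty S with h | h
    · exfalso; apply htop; rw [hsup, h, Set.image_empty, sInf_empty]
    · exact h
  have hbdd : BddBelow S := by
    refine ⟨(inner ℝ e a : ℝ) / (inner ℝ e b : ℝ), ?_⟩
    intro l hl
    have h0 : 0 ≤ (inner ℝ e (l • b - a) : ℝ) := (interior_subset he) _ hl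
    rw [inner_sub_right, real_inner_smul_right] at h0
    rw [div_le_iff₀ hbe]; linarith
  have hScl : IsClosed S := by
    have : S = (fun l : ℝ => l • b - a) ⁻¹' C := rfl
    rw [this]
    exact hC.1.preimage (by fun_prop)
  have hmem : sInf S ∈ S := hScl.csInf_mem hSne hbdd
  refine ⟨sInf S, ?_, hmem, ?_⟩
  · rw [hsup]
    apply le_antisymm
    · exact sInf_le ⟨sInf S, hmem, rfl⟩
    · apply le_sInf
      rintro x ⟨l, hl, rfl⟩
      exact EReal.coe_le_coe_iff.mpr (csInf_le hbdd hl)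
  · have h0 : 0 ≤ (inner ℝ e (sInf S • b - a) : ℝ) := (interior_subset he) _ hmem
    rw [inner_sub_right, real_inner_smul_right] at h0
    linarith

lemma tanh_log_quarter {P : ℝ} (hP : 0 < P) :
    Real.tanh (Real.log P / 4) = (Real.sqrt P - 1) / (Real.sqrt P + 1) := by
  set E := Real.exp (Real.log P / 4) with hEdef
  have hE : 0 < E := Real.exp_pos _
  have hq : Real.sqrt P = E ^ 2 := by
    have h1 : (E ^ 2) ^ 2 = P := by
      rw [hEdef, sq, sq, ← Real.exp_add, ← Real.exp_add,
        show Real.log P / 4 + Real.log P / 4 + (Real.log P / 4 + Real.log P / 4)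
          = Real.log P by ring, Real.exp_log hP]
    rw [← h1, Real.sqrt_sq (by positivity)]
  rw [Real.tanh_eq_sinh_div_cosh, Real.sinh_eq, Real.cosh_eq, Real.exp_neg, ← hEdef, hq]
  have h1 : E + E⁻¹ ≠ 0 := by positivity
  have h2 : E ^ 2 + 1 ≠ 0 := by positivity
  field_simp

set_option maxHeartbeats 1000000 in
lemma core_ineq {C : Set V} (hC : IsProperCone C) {e : V}
    (he : e ∈ interior (dualConeSet C)) {c₁ c₂ : V} (hc₁ : c₁ ∈ C) (hc₂ : c₂ ∈ C)
    (hle : (inner ℝ e c₂ : ℝ) ≤ (inner ℝ e c₁ : ℝ)) :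
    negativity C e (c₁ - c₂) ≤ (inner ℝ e c₂ : ℝ) * tanhQuarter (hilbertDist C c₁ c₂) := by
  by_cases hc20 : c₂ = 0
  · subst hc20
    have h1 : negativity C e (c₁ - 0) ≤ (inner ℝ e (0:V) : ℝ) :=
      negativity_le he hc₁ (cone_zero_mem hC) (by abel)
    simp only [inner_zero_right] at h1 ⊢
    simpa using h1
  have hμ : 0 < (inner ℝ e c₂ : ℝ) := inner_pos_of_interior he hc₂ hc20
  have hν : 0 < (inner ℝ e c₁ : ℝ) := lt_of_lt_of_le hμ hle
  have hc10 : c₁ ≠ 0 := by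
    intro h; rw [h] at hν; simp at hν
  by_cases htop : supRatio C c₁ c₂ = ⊤ ∨ supRatio C c₂ c₁ = ⊤
  · have hd : hilbertDist C c₁ c₂ = ⊤ := by unfold hilbertDist; rw [if_pos htop]
    rw [hd]
    have ht : tanhQuarter (⊤ : EReal) = 1 := by unfold tanhQuarter; rw [if_pos rfl]
    rw [ht, mul_one]
    exact negativity_le he hc₁ hc₂ rfl
  push_neg at htop
  obtain ⟨β, hβeq, hβmem, hβle⟩ := supRatio_spec hC he hc₂ hc20 htop.1
  obtain ⟨B', hB'eq, hB'mem, hB'le⟩ := supRatio_spec hC he hc₁ hc10 htop.2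
  set μ := (inner ℝ e c₂ : ℝ)
  set ν := (inner ℝ e c₁ : ℝ)
  have hβ1 : 1 ≤ β := by
    have : μ ≤ β * μ := le_trans hle (by linarith [hβle])
    nlinarith
  have hB'0 : 0 < B' := by nlinarith
  have hP1 : 1 ≤ β * B' := by
    by_contra h
    push_neg at h
    have hmem : (β * B' - 1) • c₁ ∈ C := by
      have h1 : β • (B' • c₁ - c₂) ∈ C := hC.2.2.1 β (by linarith) _ hB'mem
      have h2 := cone_add hC h1 hβmem
      have : β • (B' • c₁ - c₂) + (β • c₂ - c₁) = (β * B' - 1) • c₁ := by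
        rw [sub_smul, mul_smul, smul_sub, one_smul]; abel
      rwa [this] at h2
    have hneg : -c₁ ∈ C := by
      have := hC.2.2.1 (1 - β * B')⁻¹ (le_of_lt (inv_pos.2 (by linarith))) _ hmem
      rwa [smul_smul, show (1 - β * B')⁻¹ * (β * B' - 1) = -1 by
        rw [inv_mul_eq_div, div_eq_iff (by linarith : (1:ℝ) - β * B' ≠ 0)]; ring,
        neg_one_smul] at this
    exact hc10 (cone_pointed hC hc₁ hneg)
  have hP0 : (0:ℝ) < β * B' := by linarith
  have hd : hilbertDist C c₁ c₂ = ((Real.log (β * B') : ℝ) : EReal) := by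
    unfold hilbertDist
    rw [if_neg (by push_neg; exact htop), hβeq, hB'eq]
    simp
  have ht : tanhQuarter (hilbertDist C c₁ c₂)
      = (Real.sqrt (β * B') - 1) / (Real.sqrt (β * B') + 1) := by
    rw [hd]
    unfold tanhQuarter
    rw [if_neg (EReal.coe_ne_top _)]
    simp only [EReal.toReal_coe]
    exact tanh_log_quarter hP0
  rw [ht]
  set q := Real.sqrt (β * B') with hqdef
  have hq0 : 0 ≤ q := Real.sqrt_nonneg _
  have hq2 : q ^ 2 = β * B' := Real.sq_sqrt (le_of_lt hP0)
  have hq1 : 1 ≤ q := by nlinarith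
  by_cases hB'1 : B' ≤ 1
  · have hsub : c₁ - c₂ ∈ C := by
      have h1 : (1 - B') • c₁ ∈ C := hC.2.2.1 _ (by linarith) _ hc₁
      have h2 := cone_add hC h1 hB'mem
      have : (1 - B') • c₁ + (B' • c₁ - c₂) = c₁ - c₂ := by
        rw [sub_smul, one_smul]; abel
      rwa [this] at h2
    have h1 : negativity C e (c₁ - c₂) ≤ (inner ℝ e (0:V) : ℝ) :=
      negativity_le he hsub (cone_zero_mem hC) (by abel)
    simp only [inner_zero_right] at h1
    have : 0 ≤ μ * ((q - 1) / (q + 1)) := by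
      apply mul_nonneg (le_of_lt hμ)
      apply div_nonneg <;> linarith
    linarith
  push_neg at hB'1
  have hden : 0 < β * B' - 1 := by nlinarith
  set s : ℝ := (B' - 1) / (β * B' - 1) with hsdef
  set p : ℝ := (1 - s) / B' with hpdef
  have hs0 : 0 ≤ s := by apply div_nonneg <;> linarith
  have hs1 : s ≤ 1 := by
    rw [hsdef, div_le_one hden]; nlinarith
  have hp0 : 0 ≤ p := by apply div_nonneg <;> linarith
  have h1 : p * B' + s = 1 := by rw [hpdef]; field_simp; ring
  have h2 : p + s * β = 1 := by
    have hs' : s * (β * B' - 1) = B' - 1 := by rw [hsdef]; exact div_mul_cancel₀ _ hden.ne'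
    have hpB : p * B' = 1 - s := by rw [hpdef]; exact div_mul_cancel₀ _ hB'0.ne'
    apply mul_right_cancel₀ hB'0.ne'
    linear_combination hpB + hs'
  have hcp : p • (B' • c₁ - c₂) ∈ C := hC.2.2.1 _ hp0 _ hB'mem
  have hcm : s • (β • c₂ - c₁) ∈ C := hC.2.2.1 _ hs0 _ hβmem
  have hdecomp : c₁ - c₂ = p • (B' • c₁ - c₂) - s • (β • c₂ - c₁) := by
    have : p • (B' • c₁ - c₂) - s • (β • c₂ - c₁)
        = (p * B' + s) • c₁ - (p + s * β) • c₂ := by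
      rw [add_smul, add_smul, mul_smul, mul_smul, smul_sub, smul_sub]; abel
    rw [this, h1, h2, one_smul, one_smul]
  have hNle : negativity C e (c₁ - c₂) ≤ s * (β * μ - ν) := by
    have := negativity_le he hcp hcm hdecomp
    rwa [real_inner_smul_right, inner_sub_right, real_inner_smul_right] at this
  refine le_trans hNle ?_
  rw [hsdef, div_mul_eq_mul_div, ← mul_div_assoc, div_le_div_iff₀ hden (by linarith)]
  have hamgm : 2 * q ≤ β + B' := by
    have hsb : Real.sqrt β ^ 2 = β := Real.sq_sqrt (by linarith)
    have hsB : Real.sqrt B' ^ 2 = B' := Real.sq_sqrt (by linarith)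
    have hqmul : q = Real.sqrt β * Real.sqrt B' := by
      rw [hqdef, Real.sqrt_mul (by linarith)]
    nlinarith [sq_nonneg (Real.sqrt β - Real.sqrt B')]
  have hstep2 : (B' - 1) * (β - 1) ≤ (q - 1) ^ 2 := by nlinarith
  have hstep1 : (B' - 1) * (β * μ - ν) ≤ (B' - 1) * (β - 1) * μ := by nlinarith
  have hβμν : 0 ≤ β * μ - ν := by linarith
  have hA : (B' - 1) * (β * μ - ν) * (q + 1) ≤ (B' - 1) * (β - 1) * μ * (q + 1) :=
    mul_le_mul_of_nonneg_right hstep1 (by linarith)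
  have hB : (B' - 1) * (β - 1) * μ * (q + 1) ≤ (q - 1) ^ 2 * μ * (q + 1) :=
    mul_le_mul_of_nonneg_right (mul_le_mul_of_nonneg_right hstep2 (le_of_lt hμ)) (by linarith)
  have hC2 : (q - 1) ^ 2 * μ * (q + 1) = μ * (q - 1) * (β * B' - 1) := by
    rw [← hq2]; ring
  linarith

lemma half_baseNorm {C : Set V} {e : V} (he : e ∈ interior (dualConeSet C)) {v : V}
    (hv0 : (inner ℝ e v : ℝ) = 0) (hex : ∃ cp ∈ C, ∃ cm ∈ C, v = cp - cm) :
    (1 / 2) * baseNorm C e v = negativity C e v := by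
  have he' := interior_subset he
  set S₁ := {r : ℝ | ∃ cp ∈ C, ∃ cm ∈ C, v = cp - cm ∧ r = (inner ℝ e cp : ℝ) + (inner ℝ e cm : ℝ)}
    with hS₁
  set S₂ := {r : ℝ | ∃ cp ∈ C, ∃ cm ∈ C, v = cp - cm ∧ r = (inner ℝ e cm : ℝ)} with hS₂
  have heq : ∀ cp ∈ C, ∀ cm ∈ C, v = cp - cm → (inner ℝ e cp : ℝ) = (inner ℝ e cm : ℝ) := by
    intro cp hcp cm hcm hv
    have : (inner ℝ e v : ℝ) = (inner ℝ e cp : ℝ) - (inner ℝ e cm : ℝ) := by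
      rw [hv, inner_sub_right]
    rw [hv0] at this; linarith
  have hbdd₁ : BddBelow S₁ := by
    refine ⟨0, ?_⟩
    rintro r ⟨cp, hcp, cm, hcm, hv, rfl⟩
    have h1 := he' cp hcp; have h2 := he' cm hcm; linarith
  have hbdd₂ : BddBelow S₂ := by
    refine ⟨0, ?_⟩
    rintro r ⟨cp, hcp, cm, hcm, hv, rfl⟩
    exact he' cm hcm
  obtain ⟨cp₀, hcp₀, cm₀, hcm₀, hv₀⟩ := hex
  have hne₁ : S₁.Nonempty := ⟨_, cp₀, hcp₀, cm₀, hcm₀, hv₀, rfl⟩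
  have hne₂ : S₂.Nonempty := ⟨_, cp₀, hcp₀, cm₀, hcm₀, hv₀, rfl⟩
  show (1/2) * sInf S₁ = sInf S₂
  apply le_antisymm
  · apply le_csInf hne₂
    rintro r ⟨cp, hcp, cm, hcm, hv, rfl⟩
    have h2r : (inner ℝ e cp : ℝ) + (inner ℝ e cm : ℝ) ∈ S₁ := ⟨cp, hcp, cm, hcm, hv, rfl⟩
    have := csInf_le hbdd₁ h2r
    have heq' := heq cp hcp cm hcm hv
    linarith
  · have h2 : 2 * sInf S₂ ≤ sInf S₁ := by
      apply le_csInf hne₁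
      rintro x ⟨cp, hcp, cm, hcm, hv, rfl⟩
      have heq' := heq cp hcp cm hcm hv
      have := csInf_le hbdd₂ (⟨cp, hcp, cm, hcm, hv, rfl⟩ : (inner ℝ e cm : ℝ) ∈ S₂)
      linarith
    linarith

end AuxLemmas

/-- **Base norm vs. Hilbert's projective metric.** -/
theorem baseNorm_vs_hilbert_metric
    {V : Type*} [NormedAddCommGroup V] [InnerProductSpace ℝ V] [FiniteDimensional ℝ V]
    (C : Set V) (hC : IsProperCone C)
    (e : V) (he : e ∈ interior (dualConeSet C))
    (B : Set V) (hB : B = C ∩ {v : V | (inner ℝ e v : ℝ) = 1}) :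
    (∀ b₁ ∈ B, ∀ b₂ ∈ B,
      (1 / 2) * baseNorm C e (b₁ - b₂) = negativity C e (b₁ - b₂) ∧
      negativity C e (b₁ - b₂) ≤ tanhQuarter (hilbertDist C b₁ b₂)) ∧
    (∀ c₁ ∈ C, ∀ c₂ ∈ C, (inner ℝ e c₂ : ℝ) ≤ (inner ℝ e c₁ : ℝ) →
      negativity C e (c₁ - c₂) ≤ (inner ℝ e c₂ : ℝ) * tanhQuarter (hilbertDist C c₁ c₂)) := by
  constructor
  · intro b₁ hb₁ b₂ hb₂
    rw [hB] at hb₁ hb₂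
    obtain ⟨hb₁C, hb₁e⟩ := hb₁
    obtain ⟨hb₂C, hb₂e⟩ := hb₂
    rw [Set.mem_setOf_eq] at hb₁e hb₂e
    constructor
    · apply half_baseNorm he
      · rw [inner_sub_right, hb₁e, hb₂e]; ring
      · exact ⟨b₁, hb₁C, b₂, hb₂C, rfl⟩
    · have h := core_ineq hC he hb₁C hb₂C (by rw [hb₁e, hb₂e])
      rwa [hb₂e, one_mul] at h
  · intro c₁ hc₁ c₂ hc₂ hle
    exact core_ineq hC he hc₁ hc₂ hle


end
end
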